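/- arXiv:2308.04916 — 9 statements merged into one kernel-verified Lean document; each statement's English description precedes it below -/
import Mathlib

section
/- Let Y be a real random variable and t > 0. If L(t) = E[exp(t|Y|)] is finite, then E[Y^2] ≤ t^{-2} (8 + 2 (log L(t))^2). -/
open MeasureTheory Real

/-- If `L(t) = E[exp(t|Y|)]` is finite for some `t > 0`, then
`E[Y²] ≤ t⁻²(8 + 2 (log L(t))²)`. -/
theorem second_moment_le_of_laplace {Ω : Type*} [MeasurableSpace Ω]
    (μ : Measure Ω) [IsProbabilityMeasure μ] (Y : Ω → ℝ) (t : ℝ) (ht : 0 < t)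
    (hL : Integrable (fun ω => Real.exp (t * |Y ω|)) μ) :
    ∫ ω, (Y ω) ^ 2 ∂μ ≤
      (8 + 2 * (Real.log (∫ ω, Real.exp (t * |Y ω|) ∂μ)) ^ 2) / t ^ 2 := by
  set M := ∫ ω, Real.exp (t * |Y ω|) ∂μ with hMdef
  have hM1 : (1 : ℝ) ≤ M := by
    have h := integral_mono (μ := μ) (integrable_const (1 : ℝ)) hL
      (fun ω => Real.one_le_exp (by positivity))
    simpa using h
  have hM0 : 0 < M := lt_of_lt_of_le one_pos hM1
  set a := Real.log M with hadef
  have ha0 : 0 ≤ a := Real.log_nonneg hM1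
  set g : Ω → ℝ := fun ω =>
    (2 * a ^ 2) / t ^ 2 + (8 * Real.exp (-a) / t ^ 2) * Real.exp (t * |Y ω|) with hgdef
  have hgint : Integrable g μ := (integrable_const _).add (hL.const_mul _)
  have key : ∀ ω, (Y ω) ^ 2 ≤ g ω := by
    intro ω
    have hx0 : 0 ≤ t * |Y ω| := by positivity
    set x := t * |Y ω| with hxdef
    have hYx : (Y ω) ^ 2 = x ^ 2 / t ^ 2 := by
      rw [hxdef, mul_pow, sq_abs]
      field_simp
    have hmain : x ^ 2 ≤ 2 * a ^ 2 + 8 * Real.exp (-a) * Real.exp x := by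
      have hexp : Real.exp (-a) * Real.exp x = Real.exp (x - a) := by
        rw [← Real.exp_add]; ring_nf
      rcases le_or_gt x a with h | h
      · nlinarith [Real.exp_pos (-a), Real.exp_pos x,
          mul_pos (Real.exp_pos (-a)) (Real.exp_pos x)]
      · have h2 : (x - a) ^ 2 ≤ 4 * Real.exp (x - a) := by
          have hu : 0 ≤ x - a := le_of_lt (sub_pos.mpr h)
          have h3 := Real.add_one_le_exp ((x - a) / 2)
          have h4 : Real.exp ((x - a) / 2) * Real.exp ((x - a) / 2) = Real.exp (x - a) := by
            rw [← Real.exp_add]; ring_nf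
          nlinarith [Real.exp_pos ((x - a) / 2)]
        nlinarith [hexp, sq_nonneg (x - 2*a), h2]
    have hgω : g ω = 2 * a ^ 2 / t ^ 2 + 8 * Real.exp (-a) / t ^ 2 * Real.exp x := rfl
    rw [hYx, hgω]
    have heq : 2 * a ^ 2 / t ^ 2 + 8 * Real.exp (-a) / t ^ 2 * Real.exp x
        = (2 * a ^ 2 + 8 * Real.exp (-a) * Real.exp x) / t ^ 2 := by ring
    rw [heq]
    gcongr
  have hmeasY2 : AEMeasurable (fun ω => (Y ω) ^ 2) μ := by
    have h1 : AEMeasurable (fun ω => Real.exp (t * |Y ω|)) μ := hL.aemeasurable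
    have h2 : AEMeasurable (fun ω => (Real.log (Real.exp (t * |Y ω|)) / t) ^ 2) μ :=
      ((Real.measurable_log.comp_aemeasurable h1).div_const t).pow_const 2
    refine h2.congr (Filter.Eventually.of_forall fun ω => ?_)
    simp only [Real.log_exp]
    rw [mul_div_cancel_left₀ _ (ne_of_gt ht), sq_abs]
  have hY2int : Integrable (fun ω => (Y ω) ^ 2) μ := by
    refine Integrable.mono' hgint hmeasY2.aestronglyMeasurable
      (Filter.Eventually.of_forall fun ω => ?_)
    rw [Real.norm_eq_abs, abs_of_nonneg (sq_nonneg _)]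
    exact key ω
  have hle : ∫ ω, (Y ω) ^ 2 ∂μ ≤ ∫ ω, g ω ∂μ :=
    integral_mono hY2int hgint key
  have hgval : ∫ ω, g ω ∂μ = 2 * a ^ 2 / t ^ 2 + 8 / t ^ 2 := by
    rw [hgdef]
    rw [integral_add (integrable_const _) (hL.const_mul _), integral_const,
      integral_const_mul]
    have : Real.exp (-a) * M = 1 := by
      rw [hadef, Real.exp_neg, Real.exp_log hM0, inv_mul_cancel₀ (ne_of_gt hM0)]
    simp only [measure_univ, probReal_univ, ENNReal.toReal_one, one_smul, ← hMdef]
    rw [mul_div_assoc, mul_comm (8 * Real.exp (-a) / t ^ 2) M]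
    field_simp
    nlinarith [this]
  calc ∫ ω, (Y ω) ^ 2 ∂μ ≤ 2 * a ^ 2 / t ^ 2 + 8 / t ^ 2 := hgval ▸ hle
    _ = (8 + 2 * a ^ 2) / t ^ 2 := by ring
end

section
/- Let f_0 = (f_{0,lk}) with l ≥ 0, k ∈ {0,...,2^l − 1} satisfy ∑_{l≥0} 2^{r l (β + 1/2 − 1/r)} ∑_k |f_{0,lk}|^r ≤ L^r for some 1 ≤ r ≤ 2, β > 1/r − 1/2, L > 0. Fix J_0 with 2^{J_0} = n^{1/(2β+1)}. Then for any 0 < δ_n ≤ 1, the set Σ_0 = {(l,k) : |f_{0,lk}| > δ_n/√n} has cardinality at most A δ_n^{-r} 2^{J_0} for a constant A depending only on β, r, L. -/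
open Real

set_option maxHeartbeats 1000000 in
/-- For `f₀` in a Besov ball `B^β_{rr}(L)` (wavelet sequence form), with
`2^{J₀} = n^{1/(2β+1)}`, the set of coefficients exceeding `δ_n/√n` has cardinality
at most `A δ_n^{-r} 2^{J₀}` with `A = A(β,r,L)`. -/
theorem besov_large_coeff_count (β r L : ℝ) (hr1 : 1 ≤ r) (hr2 : r ≤ 2)
    (hβ : 1 / r - 1 / 2 < β) (hL : 0 < L) :
    ∃ A : ℝ, 0 < A ∧ ∀ f₀ : ℕ → ℕ → ℝ,
      (∑' l : ℕ, (2 : ℝ) ^ (r * l * (β + 1 / 2 - 1 / r)) *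
          ∑ k ∈ Finset.range (2 ^ l), |f₀ l k| ^ r ≤ L ^ r) →
      Summable (fun l : ℕ => (2 : ℝ) ^ (r * l * (β + 1 / 2 - 1 / r)) *
          ∑ k ∈ Finset.range (2 ^ l), |f₀ l k| ^ r) →
      ∀ n : ℕ, 1 ≤ n → ∀ J₀ : ℝ, (2 : ℝ) ^ J₀ = (n : ℝ) ^ ((1 : ℝ) / (2 * β + 1)) →
      ∀ δn : ℝ, 0 < δn → δn ≤ 1 →
        (Set.ncard {p : ℕ × ℕ | p.2 < 2 ^ p.1 ∧ δn / Real.sqrt n < |f₀ p.1 p.2|} : ℝ) ≤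
          A * δn ^ (-r) * (2 : ℝ) ^ J₀ := by
  classical
  have hr0 : (0:ℝ) < r := lt_of_lt_of_le one_pos hr1
  set s : ℝ := β + 1 / 2 - 1 / r with hs_def
  have h1r : (0:ℝ) < 1 / r := by positivity
  have hs : 0 < s := by rw [hs_def]; linarith
  have h2β : (0:ℝ) < 2 * β + 1 := by linarith
  have hrs : 0 < r * s := by positivity
  set q : ℝ := (2:ℝ) ^ (-(r * s)) with hq_def
  have hq0 : 0 < q := Real.rpow_pos_of_pos two_pos _
  have hq1 : q < 1 := Real.rpow_lt_one_of_one_lt_of_neg one_lt_two (by linarith)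
  have h1q : 0 < 1 - q := by linarith
  have hLr : 0 < L ^ r := Real.rpow_pos_of_pos hL r
  refine ⟨2 + L ^ r / (1 - q), by
    have : 0 ≤ L ^ r / (1 - q) := div_nonneg hLr.le h1q.le
    linarith, ?_⟩
  intro f₀ hB hS n hn J₀ hJ δn hδ0 hδ1
  have hn0 : (0:ℝ) < (n:ℝ) := by exact_mod_cast hn
  have hn1 : (1:ℝ) ≤ (n:ℝ) := by exact_mod_cast hn
  have hsq : 0 < Real.sqrt n := Real.sqrt_pos.mpr hn0
  have h2J : (0:ℝ) < (2:ℝ) ^ J₀ := Real.rpow_pos_of_pos two_pos _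
  have hJ₀0 : 0 ≤ J₀ := by
    by_contra h
    push_neg at h
    have h1 : (2:ℝ) ^ J₀ < 1 := Real.rpow_lt_one_of_one_lt_of_neg one_lt_two h
    have h2 : (1:ℝ) ≤ (2:ℝ) ^ J₀ := by
      rw [hJ]
      exact Real.one_le_rpow hn1 (by positivity)
    linarith
  -- per-level Besov bound
  have hterm : ∀ l : ℕ, ∑ k ∈ Finset.range (2 ^ l), |f₀ l k| ^ r ≤ L ^ r * q ^ l := by
    intro l
    have hpos : (0:ℝ) < (2:ℝ) ^ (r * l * s) := Real.rpow_pos_of_pos two_pos _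
    have h1 : (2:ℝ) ^ (r * l * s) * ∑ k ∈ Finset.range (2 ^ l), |f₀ l k| ^ r ≤ L ^ r :=
      le_trans (Summable.le_tsum hS l (fun i _ => by positivity)) hB
    have hql : q ^ l = ((2:ℝ) ^ (r * l * s))⁻¹ := by
      rw [hq_def, ← Real.rpow_natCast ((2:ℝ) ^ (-(r * s))) l,
        ← Real.rpow_mul (by norm_num : (0:ℝ) ≤ 2),
        ← Real.rpow_neg (by norm_num : (0:ℝ) ≤ 2)]
      congr 1
      ring
    rw [hql, ← div_eq_mul_inv, le_div_iff₀ hpos, mul_comm]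
    exact h1
  -- counting finsets per level
  set σ : ℕ → Finset ℕ :=
    fun l => (Finset.range (2 ^ l)).filter (fun k => δn / Real.sqrt n < |f₀ l k|) with hσ
  have hthr : 0 < δn / Real.sqrt n := div_pos hδ0 hsq
  have hcard : ∀ l : ℕ, ((σ l).card : ℝ) * (δn / Real.sqrt n) ^ r ≤ L ^ r * q ^ l := by
    intro l
    have h1 : (σ l).card • ((δn / Real.sqrt n) ^ r) ≤ ∑ k ∈ σ l, |f₀ l k| ^ r := by
      apply Finset.card_nsmul_le_sum
      intro k hk
      have hk' := (Finset.mem_filter.mp hk).2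
      exact Real.rpow_le_rpow hthr.le hk'.le hr0.le
    have h2 : ∑ k ∈ σ l, |f₀ l k| ^ r ≤ ∑ k ∈ Finset.range (2 ^ l), |f₀ l k| ^ r :=
      Finset.sum_le_sum_of_subset_of_nonneg (Finset.filter_subset _ _)
        (fun i _ _ => by positivity)
    calc ((σ l).card : ℝ) * (δn / Real.sqrt n) ^ r
        = (σ l).card • ((δn / Real.sqrt n) ^ r) := (nsmul_eq_mul _ _).symm
      _ ≤ ∑ k ∈ σ l, |f₀ l k| ^ r := h1
      _ ≤ ∑ k ∈ Finset.range (2 ^ l), |f₀ l k| ^ r := h2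
      _ ≤ L ^ r * q ^ l := hterm l
  set C : ℝ := L ^ r * (Real.sqrt n / δn) ^ r with hC
  have hC0 : 0 < C := by
    have : 0 < (Real.sqrt n / δn) ^ r := Real.rpow_pos_of_pos (div_pos hsq hδ0) r
    rw [hC]; positivity
  have hinv : (Real.sqrt n / δn) ^ r = ((δn / Real.sqrt n) ^ r)⁻¹ := by
    rw [← Real.inv_rpow hthr.le, inv_div]
  have hg : ∀ l : ℕ, ((σ l).card : ℝ) ≤ C * q ^ l := by
    intro l
    have hx : (0:ℝ) < (δn / Real.sqrt n) ^ r := Real.rpow_pos_of_pos hthr _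
    have heq : L ^ r * q ^ l / (δn / Real.sqrt n) ^ r = C * q ^ l := by
      rw [hC, hinv]; ring
    calc ((σ l).card : ℝ)
        = ((σ l).card * (δn / Real.sqrt n) ^ r) / (δn / Real.sqrt n) ^ r := by
          field_simp
      _ ≤ L ^ r * q ^ l / (δn / Real.sqrt n) ^ r :=
          (div_le_div_iff_of_pos_right hx).mpr (hcard l)
      _ = C * q ^ l := heq
  have hg2 : ∀ l : ℕ, ((σ l).card : ℝ) ≤ (2:ℝ) ^ l := by
    intro l
    have h := (Finset.card_filter_le (Finset.range (2 ^ l))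
      (fun k => δn / Real.sqrt n < |f₀ l k|)).trans_eq (Finset.card_range _)
    exact_mod_cast h
  -- large levels are empty
  have htend : Filter.Tendsto (fun l : ℕ => C * q ^ l) Filter.atTop (nhds 0) := by
    have h := tendsto_pow_atTop_nhds_zero_of_lt_one hq0.le hq1
    simpa using h.const_mul C
  obtain ⟨M, hM⟩ := Filter.eventually_atTop.mp (htend.eventually_lt_const one_pos)
  have hσ0 : ∀ l, M ≤ l → σ l = ∅ := by
    intro l hl
    by_contra h
    obtain ⟨k, hk⟩ := Finset.nonempty_iff_ne_empty.mpr h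
    have h1 : (1:ℝ) ≤ ((σ l).card : ℝ) := by
      have := Finset.card_pos.mpr ⟨k, hk⟩
      exact_mod_cast this
    have h2 := hg l
    have h3 := hM l hl
    linarith
  -- the set is contained in a finite union
  set T : Finset (ℕ × ℕ) :=
    (Finset.range M).biUnion (fun l => (σ l).image (fun k => (l, k))) with hT
  have hsub : {p : ℕ × ℕ | p.2 < 2 ^ p.1 ∧ δn / Real.sqrt n < |f₀ p.1 p.2|} ⊆ ↑T := by
    rintro ⟨l, k⟩ ⟨h1, h2⟩
    have hk : k ∈ σ l := Finset.mem_filter.mpr ⟨Finset.mem_range.mpr h1, h2⟩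
    have hlM : l < M := by
      by_contra h
      have h0 := hσ0 l (le_of_not_gt h)
      rw [h0] at hk
      exact absurd hk (Finset.notMem_empty k)
    exact Finset.mem_coe.mpr (Finset.mem_biUnion.mpr
      ⟨l, Finset.mem_range.mpr hlM, Finset.mem_image.mpr ⟨k, hk, rfl⟩⟩)
  have hncard : (Set.ncard {p : ℕ × ℕ | p.2 < 2 ^ p.1 ∧ δn / Real.sqrt n < |f₀ p.1 p.2|} : ℝ)
      ≤ ∑ l ∈ Finset.range M, ((σ l).card : ℝ) := by
    have h1 : Set.ncard {p : ℕ × ℕ | p.2 < 2 ^ p.1 ∧ δn / Real.sqrt n < |f₀ p.1 p.2|}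
        ≤ T.card := by
      have := Set.ncard_le_ncard hsub T.finite_toSet
      simpa [Set.ncard_coe_finset] using this
    have h2 : T.card ≤ ∑ l ∈ Finset.range M, (σ l).card :=
      le_trans Finset.card_biUnion_le
        (Finset.sum_le_sum fun l _ => Finset.card_image_le)
    calc (Set.ncard {p : ℕ × ℕ | p.2 < 2 ^ p.1 ∧ δn / Real.sqrt n < |f₀ p.1 p.2|} : ℝ)
        ≤ ((∑ l ∈ Finset.range M, (σ l).card : ℕ) : ℝ) := by exact_mod_cast h1.trans h2
      _ = ∑ l ∈ Finset.range M, ((σ l).card : ℝ) := by push_cast; rfl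
  -- split the sum
  have hsplit : ∑ l ∈ Finset.range M, ((σ l).card : ℝ) ≤
      (∑ l ∈ (Finset.range M).filter (fun l : ℕ => (l:ℝ) ≤ J₀), (2:ℝ) ^ l) +
      (∑ l ∈ (Finset.range M).filter (fun l : ℕ => ¬ (l:ℝ) ≤ J₀), C * q ^ l) := by
    rw [← Finset.sum_filter_add_sum_filter_not (Finset.range M) (fun l : ℕ => (l:ℝ) ≤ J₀)
      (fun l => ((σ l).card : ℝ))]
    exact add_le_add (Finset.sum_le_sum fun l _ => hg2 l)
      (Finset.sum_le_sum fun l _ => hg l)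
  -- low levels
  have hlow : ∑ l ∈ (Finset.range M).filter (fun l : ℕ => (l:ℝ) ≤ J₀), (2:ℝ) ^ l
      ≤ 2 * (2:ℝ) ^ J₀ := by
    have hsubl : (Finset.range M).filter (fun l : ℕ => (l:ℝ) ≤ J₀)
        ⊆ Finset.range (⌊J₀⌋₊ + 1) := by
      intro l hl
      rw [Finset.mem_range, Nat.lt_succ_iff]
      exact Nat.le_floor (Finset.mem_filter.mp hl).2
    have hfl : (2:ℝ) ^ (⌊J₀⌋₊ : ℕ) ≤ (2:ℝ) ^ J₀ := by
      rw [← Real.rpow_natCast 2 ⌊J₀⌋₊]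
      exact Real.rpow_le_rpow_of_exponent_le one_le_two (Nat.floor_le hJ₀0)
    calc ∑ l ∈ (Finset.range M).filter (fun l : ℕ => (l:ℝ) ≤ J₀), (2:ℝ) ^ l
        ≤ ∑ l ∈ Finset.range (⌊J₀⌋₊ + 1), (2:ℝ) ^ l :=
          Finset.sum_le_sum_of_subset_of_nonneg hsubl (fun i _ _ => by positivity)
      _ = (2:ℝ) ^ (⌊J₀⌋₊ + 1) - 1 := by
          rw [geom_sum_eq (by norm_num : (2:ℝ) ≠ 1)]
          norm_num
      _ ≤ 2 * (2:ℝ) ^ J₀ := by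
          rw [pow_succ]
          nlinarith
  -- high levels
  have hhigh : ∑ l ∈ (Finset.range M).filter (fun l : ℕ => ¬ (l:ℝ) ≤ J₀), C * q ^ l
      ≤ C * (q ^ J₀ * (1 - q)⁻¹) := by
    set m' := ⌈J₀⌉₊ with hm'
    have hsubh : (Finset.range M).filter (fun l : ℕ => ¬ (l:ℝ) ≤ J₀)
        ⊆ Finset.Ico m' (m' + M) := by
      intro l hl
      obtain ⟨hl1, hl2⟩ := Finset.mem_filter.mp hl
      rw [Finset.mem_Ico]
      refine ⟨Nat.ceil_le.mpr (le_of_lt (lt_of_not_ge hl2)), ?_⟩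
      have := Finset.mem_range.mp hl1
      omega
    have hIco : ∑ l ∈ Finset.Ico m' (m' + M), q ^ l
        = q ^ m' * ∑ j ∈ Finset.range M, q ^ j := by
      rw [Finset.sum_Ico_eq_sum_range]
      have hM' : m' + M - m' = M := by omega
      rw [hM', Finset.mul_sum]
      exact Finset.sum_congr rfl fun j _ => by rw [pow_add]
    have hqm : q ^ m' ≤ q ^ J₀ := by
      rw [← Real.rpow_natCast q m']
      exact Real.rpow_le_rpow_of_exponent_ge hq0 hq1.le (Nat.le_ceil J₀)
    have hgeo : ∑ j ∈ Finset.range M, q ^ j ≤ (1 - q)⁻¹ := by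
      have h1 : ∑ j ∈ Finset.range M, q ^ j ≤ ∑' j : ℕ, q ^ j :=
        Summable.sum_le_tsum (Finset.range M) (fun i _ => by positivity)
          (summable_geometric_of_lt_one hq0.le hq1)
      rw [tsum_geometric_of_lt_one hq0.le hq1] at h1
      exact h1
    have hqJ : (0:ℝ) ≤ q ^ J₀ := (Real.rpow_pos_of_pos hq0 _).le
    calc ∑ l ∈ (Finset.range M).filter (fun l : ℕ => ¬ (l:ℝ) ≤ J₀), C * q ^ l
        ≤ ∑ l ∈ Finset.Ico m' (m' + M), C * q ^ l :=
          Finset.sum_le_sum_of_subset_of_nonneg hsubh (fun i _ _ => by positivity)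
      _ = C * (q ^ m' * ∑ j ∈ Finset.range M, q ^ j) := by
          rw [← Finset.mul_sum, hIco]
      _ ≤ C * (q ^ J₀ * (1 - q)⁻¹) := by
          apply mul_le_mul_of_nonneg_left _ hC0.le
          apply mul_le_mul hqm hgeo (Finset.sum_nonneg fun i _ => by positivity) hqJ
  -- key identity: C * q^J₀ = L^r δn^{-r} 2^{J₀}
  have hkey : C * q ^ J₀ = L ^ r * δn ^ (-r) * (2:ℝ) ^ J₀ := by
    have h1 : (Real.sqrt n / δn) ^ r = (n:ℝ) ^ (r / 2) * δn ^ (-r) := by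
      rw [Real.div_rpow (Real.sqrt_nonneg _) hδ0.le, Real.rpow_neg hδ0.le, div_eq_mul_inv]
      congr 1
      rw [Real.sqrt_eq_rpow, ← Real.rpow_mul hn0.le]
      congr 1
      ring
    have h2 : q ^ J₀ = (n:ℝ) ^ ((1 / (2 * β + 1)) * (-(r * s))) := by
      rw [Real.rpow_mul hn0.le, ← hJ, hq_def,
        ← Real.rpow_mul (by norm_num : (0:ℝ) ≤ 2),
        ← Real.rpow_mul (by norm_num : (0:ℝ) ≤ 2)]
      congr 1
      ring
    have h3 : (n:ℝ) ^ (r / 2) * (n:ℝ) ^ ((1 / (2 * β + 1)) * (-(r * s)))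
        = (n:ℝ) ^ ((1:ℝ) / (2 * β + 1)) := by
      rw [← Real.rpow_add hn0]
      congr 1
      rw [hs_def]
      field_simp
      ring
    calc C * q ^ J₀
        = L ^ r * δn ^ (-r) * ((n:ℝ) ^ (r / 2) * (n:ℝ) ^ ((1 / (2 * β + 1)) * (-(r * s)))) := by
          rw [hC, h1, h2]; ring
      _ = L ^ r * δn ^ (-r) * (2:ℝ) ^ J₀ := by rw [h3, ← hJ]
  have hδr : (1:ℝ) ≤ δn ^ (-r) := by
    rw [Real.rpow_neg hδ0.le]
    have h1 : δn ^ r ≤ 1 := Real.rpow_le_one hδ0.le hδ1 hr0.le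
    have h2 : 0 < δn ^ r := Real.rpow_pos_of_pos hδ0 r
    rw [le_inv_comm₀ one_pos h2]
    simpa using h1
  have hδrpos : (0:ℝ) < δn ^ (-r) := Real.rpow_pos_of_pos hδ0 _
  calc (Set.ncard {p : ℕ × ℕ | p.2 < 2 ^ p.1 ∧ δn / Real.sqrt n < |f₀ p.1 p.2|} : ℝ)
      ≤ ∑ l ∈ Finset.range M, ((σ l).card : ℝ) := hncard
    _ ≤ (∑ l ∈ (Finset.range M).filter (fun l : ℕ => (l:ℝ) ≤ J₀), (2:ℝ) ^ l) +
        (∑ l ∈ (Finset.range M).filter (fun l : ℕ => ¬ (l:ℝ) ≤ J₀), C * q ^ l) := hsplit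
    _ ≤ 2 * (2:ℝ) ^ J₀ + C * (q ^ J₀ * (1 - q)⁻¹) := add_le_add hlow hhigh
    _ = 2 * (2:ℝ) ^ J₀ + (L ^ r * δn ^ (-r) * (2:ℝ) ^ J₀) * (1 - q)⁻¹ := by
        rw [← mul_assoc, hkey]
    _ ≤ (2 + L ^ r / (1 - q)) * δn ^ (-r) * (2:ℝ) ^ J₀ := by
        have hexp : (2 + L ^ r / (1 - q)) * δn ^ (-r) * (2:ℝ) ^ J₀
            = 2 * δn ^ (-r) * (2:ℝ) ^ J₀
              + (L ^ r * δn ^ (-r) * (2:ℝ) ^ J₀) * (1 - q)⁻¹ := by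
          rw [div_eq_mul_inv]
          ring
        rw [hexp]
        have h4 : 2 * (2:ℝ) ^ J₀ ≤ 2 * δn ^ (-r) * (2:ℝ) ^ J₀ := by
          have h5 : (2:ℝ) ^ J₀ ≤ δn ^ (-r) * (2:ℝ) ^ J₀ :=
            le_mul_of_one_le_left h2J.le hδr
          rw [mul_assoc]
          linarith
        linarith
end

section
/- Let f_0 ∈ B^β_{rr}(L) as a wavelet sequence, with 1 ≤ r ≤ 2, β > 1/r − 1/2, L > 0. Define J_0 by 2^{J_0} = n^{1/(2β+1)} and J_1 by 2^{J_1} = n^{(β/(2β+1))·(1/β')} with β' = β − (1/r − 1/2)_+. Then there is a constant A = A(β, r, L) with ∑_{l ≤ J_1, k} f_{0,lk}^2 1{|f_{0,lk}| ≤ 1/√n} + ∑_{l > J_1, k} f_{0,lk}^2 ≤ A n^{-2β/(2β+1)}. -/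
open Real

lemma my_add_rpow_le (a b p : ℝ) (ha : 0 ≤ a) (hb : 0 ≤ b) (hp : 1 ≤ p) :
    a ^ p + b ^ p ≤ (a + b) ^ p := by
  have h := NNReal.add_rpow_le_rpow_add (a.toNNReal) (b.toNNReal) hp
  have h2 := NNReal.coe_le_coe.2 h
  simpa [NNReal.coe_rpow, Real.coe_toNNReal a ha, Real.coe_toNNReal b hb,
    Real.toNNReal_add ha hb] using h2

lemma my_sum_rpow_le {ι : Type*} (s : Finset ι) (a : ι → ℝ) (ha : ∀ i ∈ s, 0 ≤ a i)
    (p : ℝ) (hp : 1 ≤ p) : ∑ i ∈ s, a i ^ p ≤ (∑ i ∈ s, a i) ^ p := by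
  induction s using Finset.cons_induction with
  | empty => simp [Real.zero_rpow (by linarith : p ≠ 0)]
  | cons i s his ih =>
    rw [Finset.sum_cons, Finset.sum_cons]
    have h1 : ∀ j ∈ s, 0 ≤ a j := fun j hj => ha j (Finset.mem_cons_of_mem hj)
    have h2 : 0 ≤ ∑ j ∈ s, a j := Finset.sum_nonneg h1
    calc a i ^ p + ∑ j ∈ s, a j ^ p ≤ a i ^ p + (∑ j ∈ s, a j) ^ p := by
          linarith [ih h1]
      _ ≤ (a i + ∑ j ∈ s, a j) ^ p :=
          my_add_rpow_le _ _ p (ha i (Finset.mem_cons_self i s)) h2 hp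

lemma my_tail_geom (c ρ : ℝ) (h0 : 0 ≤ ρ) (h1 : ρ < 1) (m : ℕ) :
    ∑' l : ℕ, (if m ≤ l then c * ρ ^ l else 0) = c * ρ ^ m * (1 - ρ)⁻¹ := by
  have hinj : Function.Injective (fun j : ℕ => m + j) := fun a b h => by
    simpa using h
  have hsupp : Function.support (fun l : ℕ => if m ≤ l then c * ρ ^ l else 0)
      ⊆ Set.range (fun j : ℕ => m + j) := by
    intro l hl
    rcases le_or_gt m l with h | h
    · exact ⟨l - m, by simp; omega⟩
    · simp only [Function.mem_support, if_neg (not_le.2 h), ne_eq, not_true_eq_false] at hl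
  rw [← hinj.tsum_eq hsupp]
  have he : ∀ j : ℕ, (if m ≤ m + j then c * ρ ^ (m + j) else 0) = (c * ρ ^ m) * ρ ^ j := by
    intro j
    rw [if_pos (Nat.le_add_right _ _), pow_add]; ring
  simp only [he]
  rw [tsum_mul_left, tsum_geometric_of_lt_one h0 h1]

lemma my_summable_tail (c ρ : ℝ) (hc : 0 ≤ c) (h0 : 0 ≤ ρ) (h1 : ρ < 1) (m : ℕ) :
    Summable (fun l : ℕ => if m ≤ l then c * ρ ^ l else 0) := by
  refine Summable.of_nonneg_of_le (fun l => ?_) (fun l => ?_)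
    ((summable_geometric_of_lt_one h0 h1).mul_left c)
  · split <;> positivity
  · split
    · exact le_rfl
    · positivity

set_option maxHeartbeats 1000000 in
/-- For `f₀ ∈ B^β_{rr}(L)`, with `2^{J₀} = n^{1/(2β+1)}` and
`2^{J₁} = n^{(β/(2β+1))/β'}`, `β' = β − (1/r − 1/2)₊`, the sum of squares of small
coefficients at levels `l ≤ J₁` plus the full energy at levels `l > J₁` is at most
`A n^{-2β/(2β+1)}`. -/
theorem besov_small_coeff_energy (β r L : ℝ) (hr1 : 1 ≤ r) (hr2 : r ≤ 2)
    (hβ : 1 / r - 1 / 2 < β) (hL : 0 < L) :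
    ∃ A : ℝ, 0 < A ∧ ∀ f₀ : ℕ → ℕ → ℝ,
      (∑' l : ℕ, (2 : ℝ) ^ (r * l * (β + 1 / 2 - 1 / r)) *
          ∑ k ∈ Finset.range (2 ^ l), |f₀ l k| ^ r ≤ L ^ r) →
      Summable (fun l : ℕ => (2 : ℝ) ^ (r * l * (β + 1 / 2 - 1 / r)) *
          ∑ k ∈ Finset.range (2 ^ l), |f₀ l k| ^ r) →
      ∀ n : ℕ, 1 ≤ n → ∀ J₁ : ℝ,
        (2 : ℝ) ^ J₁ = (n : ℝ) ^ ((β / (2 * β + 1)) * (1 / (β - max (1 / r - 1 / 2) 0))) →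
        (∑' l : ℕ, ∑ k ∈ Finset.range (2 ^ l),
            (if (l : ℝ) ≤ J₁ ∧ |f₀ l k| ≤ 1 / Real.sqrt n then (f₀ l k) ^ 2 else 0)) +
          (∑' l : ℕ, ∑ k ∈ Finset.range (2 ^ l),
            (if J₁ < (l : ℝ) then (f₀ l k) ^ 2 else 0)) ≤
          A * (n : ℝ) ^ (-(2 * β) / (2 * β + 1)) := by
  have hr0 : (0:ℝ) < r := lt_of_lt_of_le one_pos hr1
  have hr0' : r ≠ 0 := ne_of_gt hr0
  have hhalf : (1:ℝ)/2 ≤ 1/r := by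
    rw [div_le_div_iff₀ (by norm_num) hr0]; linarith
  have hbp0 : 0 < β + 1/2 - 1/r := by linarith
  set bp := β + 1/2 - 1/r with hbp_def
  have hbp' : bp ≠ 0 := ne_of_gt hbp0
  have hβ0 : (0:ℝ) < β := by
    have : (0:ℝ) ≤ 1/r - 1/2 := by linarith
    linarith
  have h2β : (0:ℝ) < 2*β + 1 := by linarith
  have h2β' : (2*β + 1 : ℝ) ≠ 0 := ne_of_gt h2β
  have hmax : β - max (1/r - 1/2) 0 = bp := by
    rw [max_eq_left (by linarith)]; rw [hbp_def]; ring
  set ρ₁ := (2:ℝ) ^ (-(r*bp)) with hρ₁_def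
  set ρ₂ := (2:ℝ) ^ (-(2*bp)) with hρ₂_def
  have hρ₁0 : 0 < ρ₁ := Real.rpow_pos_of_pos two_pos _
  have hρ₁1 : ρ₁ < 1 := Real.rpow_lt_one_of_one_lt_of_neg one_lt_two (by nlinarith)
  have hρ₂0 : 0 < ρ₂ := Real.rpow_pos_of_pos two_pos _
  have hρ₂1 : ρ₂ < 1 := Real.rpow_lt_one_of_one_lt_of_neg one_lt_two (by nlinarith)
  have hLr : (0:ℝ) < L ^ r := Real.rpow_pos_of_pos hL r
  have h1ρ₁ : (0:ℝ) < (1 - ρ₁)⁻¹ := inv_pos.2 (by linarith)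
  have h1ρ₂ : (0:ℝ) < (1 - ρ₂)⁻¹ := inv_pos.2 (by linarith)
  refine ⟨2 + L ^ r * (1 - ρ₁)⁻¹ + L ^ 2 * (1 - ρ₂)⁻¹, by positivity, ?_⟩
  intro f₀ hbes hsum n hn J₁ hJ₁
  rw [hmax] at hJ₁
  have hn1 : (1:ℝ) ≤ (n:ℝ) := by exact_mod_cast hn
  have hnpos : (0:ℝ) < (n:ℝ) := by linarith
  -- per-level Besov bound
  have hcnn : ∀ l : ℕ, (0:ℝ) ≤ ∑ k ∈ Finset.range (2^l), |f₀ l k| ^ r :=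
    fun l => Finset.sum_nonneg fun k _ => Real.rpow_nonneg (abs_nonneg _) r
  have hc : ∀ l : ℕ, ∑ k ∈ Finset.range (2^l), |f₀ l k| ^ r
      ≤ L ^ r * (2:ℝ) ^ (-(r * l * bp)) := by
    intro l
    have hterm : (2:ℝ) ^ (r * l * bp) * ∑ k ∈ Finset.range (2^l), |f₀ l k| ^ r ≤ L ^ r :=
      le_trans (Summable.le_tsum hsum l fun j _ =>
        mul_nonneg (Real.rpow_nonneg (by norm_num) _) (hcnn j)) hbes
    have h2 : (0:ℝ) < (2:ℝ) ^ (r * l * bp) := Real.rpow_pos_of_pos two_pos _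
    rw [Real.rpow_neg (by norm_num : (0:ℝ) ≤ 2), ← div_eq_mul_inv, le_div_iff₀ h2]
    linarith [hterm]
  -- J₁ ≥ 0
  have hepos : 0 ≤ (β / (2*β+1)) * (1/bp) := by positivity
  have hone : (1:ℝ) ≤ (2:ℝ) ^ J₁ := by
    rw [hJ₁]
    calc (1:ℝ) = 1 ^ ((β / (2*β+1)) * (1/bp)) := (Real.one_rpow _).symm
      _ ≤ _ := Real.rpow_le_rpow zero_le_one hn1 hepos
  have hJ₁0 : 0 ≤ J₁ := by
    by_contra h
    push_neg at h
    have h2 : (2:ℝ)^J₁ < 2^(0:ℝ) := Real.rpow_lt_rpow_of_exponent_lt one_lt_two h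
    rw [Real.rpow_zero] at h2; linarith
  ----------------------------------------------------------------
  -- PART 2 : tail energy
  ----------------------------------------------------------------
  set m₂ := ⌊J₁⌋₊ + 1 with hm₂
  have hiff : ∀ l : ℕ, (J₁ < (l:ℝ)) ↔ m₂ ≤ l := by
    intro l
    rw [hm₂, Nat.add_one_le_iff, Nat.floor_lt hJ₁0]
  have hpow₂ : ∀ l : ℕ, (2:ℝ) ^ ((-(2*bp)) * l) = ρ₂ ^ l := by
    intro l
    rw [hρ₂_def, ← Real.rpow_natCast ((2:ℝ) ^ (-(2*bp))) l,
      ← Real.rpow_mul (by norm_num : (0:ℝ) ≤ 2)]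
  have hF₂le : ∀ l : ℕ,
      (∑ k ∈ Finset.range (2^l), if J₁ < (l:ℝ) then (f₀ l k)^2 else 0)
      ≤ (if m₂ ≤ l then (L^2) * ρ₂ ^ l else 0) := by
    intro l
    by_cases h : J₁ < (l:ℝ)
    · rw [if_pos ((hiff l).1 h)]
      have e1 : (∑ k ∈ Finset.range (2^l), if J₁ < (l:ℝ) then (f₀ l k)^2 else 0)
          = ∑ k ∈ Finset.range (2^l), (f₀ l k)^2 := by
        refine Finset.sum_congr rfl fun k _ => if_pos h
      rw [e1]
      have hp21 : (1:ℝ) ≤ 2/r := by rw [le_div_iff₀ hr0]; linarith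
      calc ∑ k ∈ Finset.range (2^l), (f₀ l k)^2
          = ∑ k ∈ Finset.range (2^l), (|f₀ l k| ^ r) ^ (2/r) := by
            refine Finset.sum_congr rfl fun k _ => ?_
            rw [← sq_abs, ← Real.rpow_natCast (|f₀ l k|) 2, ← Real.rpow_mul (abs_nonneg _)]
            rw [show r * (2/r) = ((2:ℕ):ℝ) by push_cast; field_simp]
        _ ≤ (∑ k ∈ Finset.range (2^l), |f₀ l k| ^ r) ^ (2/r) :=
            my_sum_rpow_le _ _ (fun k _ => Real.rpow_nonneg (abs_nonneg _) r) _ hp21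
        _ ≤ (L ^ r * (2:ℝ) ^ (-(r * l * bp))) ^ (2/r) :=
            Real.rpow_le_rpow (hcnn l) (hc l) (by positivity)
        _ = L ^ 2 * ρ₂ ^ l := by
            rw [Real.mul_rpow hLr.le (Real.rpow_nonneg (by norm_num) _),
              ← Real.rpow_mul hL.le, ← Real.rpow_mul (by norm_num : (0:ℝ) ≤ 2),
              show r * (2/r) = ((2:ℕ):ℝ) by push_cast; field_simp,
              Real.rpow_natCast,
              show (-(r * (l:ℝ) * bp)) * (2/r) = (-(2*bp)) * l by field_simp,
              hpow₂ l]
    · rw [if_neg (fun hc => h ((hiff l).2 hc))]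
      have : (∑ k ∈ Finset.range (2^l), if J₁ < (l:ℝ) then (f₀ l k)^2 else 0) = 0 := by
        refine Finset.sum_eq_zero fun k _ => if_neg h
      rw [this]
  have hF₂nn : ∀ l : ℕ,
      (0:ℝ) ≤ ∑ k ∈ Finset.range (2^l), if J₁ < (l:ℝ) then (f₀ l k)^2 else 0 := by
    intro l
    refine Finset.sum_nonneg fun k _ => ?_
    split <;> positivity
  have hG₂'s := my_summable_tail (L^2) ρ₂ (by positivity) hρ₂0.le hρ₂1 m₂
  have hF₂s : Summable (fun l : ℕ =>
      ∑ k ∈ Finset.range (2^l), if J₁ < (l:ℝ) then (f₀ l k)^2 else 0) :=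
    Summable.of_nonneg_of_le hF₂nn hF₂le hG₂'s
  have hS₂ : (∑' l : ℕ, ∑ k ∈ Finset.range (2^l), if J₁ < (l:ℝ) then (f₀ l k)^2 else 0)
      ≤ L^2 * ρ₂ ^ m₂ * (1 - ρ₂)⁻¹ := by
    rw [← my_tail_geom (L^2) ρ₂ hρ₂0.le hρ₂1 m₂]
    exact Summable.tsum_le_tsum hF₂le hF₂s hG₂'s
  have hρ₂m : ρ₂ ^ m₂ ≤ (n:ℝ) ^ (-(2*β)/(2*β+1)) := by
    have hm₂J : J₁ ≤ (m₂:ℝ) := by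
      have := (Nat.lt_floor_add_one J₁).le
      rw [hm₂]; push_cast; linarith
    have e1 : ρ₂ ^ m₂ = (2:ℝ) ^ ((-(2*bp)) * m₂) := (hpow₂ m₂).symm
    rw [e1]
    have e2 : (2:ℝ) ^ ((-(2*bp)) * m₂) ≤ (2:ℝ) ^ ((-(2*bp)) * J₁) :=
      Real.rpow_le_rpow_of_exponent_le one_le_two (by nlinarith)
    refine e2.trans (le_of_eq ?_)
    rw [mul_comm, Real.rpow_mul (by norm_num : (0:ℝ) ≤ 2), hJ₁,
      ← Real.rpow_mul hnpos.le]
    congr 1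
    field_simp
  ----------------------------------------------------------------
  -- PART 1 : small coefficients
  ----------------------------------------------------------------
  set l₀ := (1/(2*β+1)) * Real.logb 2 n with hl₀
  have hl₀0 : 0 ≤ l₀ := mul_nonneg (by positivity) (Real.logb_nonneg one_lt_two hn1)
  have h2l₀ : (2:ℝ) ^ l₀ = (n:ℝ) ^ (1/(2*β+1)) := by
    rw [hl₀, mul_comm, Real.rpow_mul (by norm_num : (0:ℝ) ≤ 2),
      Real.rpow_logb two_pos (by norm_num) hnpos]
  set M := ⌊l₀⌋₊ with hM
  have hMle : (M:ℝ) ≤ l₀ := Nat.floor_le hl₀0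
  have hMlt : l₀ ≤ (M:ℝ) + 1 := (Nat.lt_floor_add_one l₀).le
  set c₁ := L ^ r * (n:ℝ) ^ (-((2-r)/2)) with hc₁
  have hc₁0 : (0:ℝ) ≤ c₁ := by positivity
  have hpow₁ : ∀ l : ℕ, (2:ℝ) ^ ((-(r*bp)) * l) = ρ₁ ^ l := by
    intro l
    rw [hρ₁_def, ← Real.rpow_natCast ((2:ℝ) ^ (-(r*bp))) l,
      ← Real.rpow_mul (by norm_num : (0:ℝ) ≤ 2)]
  -- bound 1 : crude count
  have hb1 : ∀ l : ℕ,
      (∑ k ∈ Finset.range (2^l),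
        if (l:ℝ) ≤ J₁ ∧ |f₀ l k| ≤ 1/Real.sqrt n then (f₀ l k)^2 else 0)
      ≤ (2:ℝ)^l * (n:ℝ)⁻¹ := by
    intro l
    have hstep : ∀ k ∈ Finset.range (2^l),
        (if (l:ℝ) ≤ J₁ ∧ |f₀ l k| ≤ 1/Real.sqrt n then (f₀ l k)^2 else 0) ≤ (n:ℝ)⁻¹ := by
      intro k _
      split
      · next h =>
          calc (f₀ l k)^2 = |f₀ l k|^2 := (sq_abs _).symm
            _ ≤ (1/Real.sqrt n)^2 := pow_le_pow_left₀ (abs_nonneg _) h.2 2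
            _ = (n:ℝ)⁻¹ := by
                rw [div_pow, one_pow, Real.sq_sqrt hnpos.le, one_div]
      · positivity
    calc (∑ k ∈ Finset.range (2^l),
          if (l:ℝ) ≤ J₁ ∧ |f₀ l k| ≤ 1/Real.sqrt n then (f₀ l k)^2 else 0)
        ≤ (Finset.range (2^l)).card • (n:ℝ)⁻¹ := Finset.sum_le_card_nsmul _ _ _ hstep
      _ = (2:ℝ)^l * (n:ℝ)⁻¹ := by
          rw [Finset.card_range, nsmul_eq_mul]; push_cast; ring
  -- bound 2 : Besov
  have hsqrt : (1:ℝ)/Real.sqrt n = (n:ℝ) ^ (-(1/2:ℝ)) := by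
    rw [one_div, Real.sqrt_eq_rpow, ← Real.rpow_neg hnpos.le]
  have hb2 : ∀ l : ℕ,
      (∑ k ∈ Finset.range (2^l),
        if (l:ℝ) ≤ J₁ ∧ |f₀ l k| ≤ 1/Real.sqrt n then (f₀ l k)^2 else 0)
      ≤ c₁ * ρ₁ ^ l := by
    intro l
    have hterm : ∀ k ∈ Finset.range (2^l),
        (if (l:ℝ) ≤ J₁ ∧ |f₀ l k| ≤ 1/Real.sqrt n then (f₀ l k)^2 else 0)
        ≤ (n:ℝ)^(-((2-r)/2)) * |f₀ l k| ^ r := by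
      intro k _
      have hrhs : (0:ℝ) ≤ (n:ℝ)^(-((2-r)/2)) * |f₀ l k| ^ r := by positivity
      split
      · next h =>
          rcases eq_or_lt_of_le (abs_nonneg (f₀ l k)) with h0 | h0
          · have hz : f₀ l k = 0 := abs_eq_zero.1 h0.symm
            rw [hz]; simp [Real.zero_rpow hr0']
          · have key : (f₀ l k)^2 = |f₀ l k| ^ (2-r) * |f₀ l k| ^ r := by
              rw [← Real.rpow_add h0, show (2-r) + r = ((2:ℕ):ℝ) by push_cast; ring,
                Real.rpow_natCast, sq_abs]
            rw [key]
            have h1 : |f₀ l k| ^ (2-r) ≤ (1/Real.sqrt n) ^ (2-r) :=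
              Real.rpow_le_rpow (abs_nonneg _) h.2 (by linarith)
            have h2 : ((1:ℝ)/Real.sqrt n) ^ (2-r) = (n:ℝ)^(-((2-r)/2)) := by
              rw [hsqrt, ← Real.rpow_mul hnpos.le,
                show (-(1/2:ℝ)) * (2-r) = -((2-r)/2) by ring]
            rw [← h2]
            exact mul_le_mul_of_nonneg_right h1 (Real.rpow_nonneg (abs_nonneg _) r)
      · exact hrhs
    calc (∑ k ∈ Finset.range (2^l),
          if (l:ℝ) ≤ J₁ ∧ |f₀ l k| ≤ 1/Real.sqrt n then (f₀ l k)^2 else 0)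
        ≤ ∑ k ∈ Finset.range (2^l), (n:ℝ)^(-((2-r)/2)) * |f₀ l k| ^ r :=
          Finset.sum_le_sum hterm
      _ = (n:ℝ)^(-((2-r)/2)) * ∑ k ∈ Finset.range (2^l), |f₀ l k| ^ r := by
          rw [Finset.mul_sum]
      _ ≤ (n:ℝ)^(-((2-r)/2)) * (L ^ r * (2:ℝ) ^ (-(r * l * bp))) :=
          mul_le_mul_of_nonneg_left (hc l) (by positivity)
      _ = c₁ * ρ₁ ^ l := by
          rw [hc₁, ← hpow₁ l, show (-(r*bp)) * (l:ℝ) = -(r * l * bp) by ring]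
          ring
  -- combine the two bounds
  set G₁ : ℕ → ℝ := fun l => if l ≤ M then (2:ℝ)^l * (n:ℝ)⁻¹ else 0 with hG₁
  set G₂ : ℕ → ℝ := fun l => if M+1 ≤ l then c₁ * ρ₁ ^ l else 0 with hG₂
  have hpt : ∀ l : ℕ,
      (∑ k ∈ Finset.range (2^l),
        if (l:ℝ) ≤ J₁ ∧ |f₀ l k| ≤ 1/Real.sqrt n then (f₀ l k)^2 else 0)
      ≤ G₁ l + G₂ l := by
    intro l
    rcases le_or_gt l M with h | h
    · rw [hG₁, hG₂]
      simp only [if_pos h, if_neg (by omega : ¬ (M+1 ≤ l))]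
      simpa using hb1 l
    · rw [hG₁, hG₂]
      simp only [if_neg (by omega : ¬ (l ≤ M)), if_pos (by omega : M+1 ≤ l)]
      simpa using hb2 l
  have hG₁s : Summable G₁ := by
    refine summable_of_ne_finset_zero (s := Finset.range (M+1)) fun l hl => ?_
    rw [hG₁]
    exact if_neg (by simp at hl; omega)
  have hG₂s : Summable G₂ := my_summable_tail c₁ ρ₁ hc₁0 hρ₁0.le hρ₁1 (M+1)
  have hF₁nn : ∀ l : ℕ, (0:ℝ) ≤ ∑ k ∈ Finset.range (2^l),
      if (l:ℝ) ≤ J₁ ∧ |f₀ l k| ≤ 1/Real.sqrt n then (f₀ l k)^2 else 0 := by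
    intro l
    refine Finset.sum_nonneg fun k _ => ?_
    split <;> positivity
  have hF₁s : Summable (fun l : ℕ => ∑ k ∈ Finset.range (2^l),
      if (l:ℝ) ≤ J₁ ∧ |f₀ l k| ≤ 1/Real.sqrt n then (f₀ l k)^2 else 0) :=
    Summable.of_nonneg_of_le hF₁nn hpt (hG₁s.add hG₂s)
  -- evaluate the two geometric pieces
  have htG₁ : ∑' l, G₁ l ≤ 2 * (n:ℝ) ^ (-(2*β)/(2*β+1)) := by
    have e1 : ∑' l, G₁ l = ∑ l ∈ Finset.range (M+1), (2:ℝ)^l * (n:ℝ)⁻¹ := by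
      have e0 : ∑' l, G₁ l = ∑ l ∈ Finset.range (M+1), G₁ l :=
        tsum_eq_sum (f := G₁) fun l hl => by
          rw [hG₁]; exact if_neg (by simp at hl; omega)
      rw [e0]
      refine Finset.sum_congr rfl fun l hl => ?_
      rw [hG₁]
      exact if_pos (by simp at hl; omega)
    have e1' : ∑ l ∈ Finset.range (M+1), (2:ℝ)^l * (n:ℝ)⁻¹
        = ((2:ℝ)^(M+1) - 1) * (n:ℝ)⁻¹ := by
      rw [← Finset.sum_mul, geom_sum_eq (by norm_num : (2:ℝ) ≠ 1)]
      norm_num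
    have e2 : ((2:ℝ)^(M+1) - 1) * (n:ℝ)⁻¹ ≤ 2 * (2:ℝ)^l₀ * (n:ℝ)⁻¹ := by
      have h3 : (2:ℝ)^(M:ℕ) ≤ (2:ℝ)^l₀ := by
        rw [← Real.rpow_natCast 2 M]
        exact Real.rpow_le_rpow_of_exponent_le one_le_two hMle
      have h4 : (2:ℝ)^(M+1) = 2 * (2:ℝ)^(M:ℕ) := by ring
      nlinarith [inv_pos.2 hnpos, Real.rpow_pos_of_pos two_pos l₀]
    have e3 : 2 * (2:ℝ)^l₀ * (n:ℝ)⁻¹ = 2 * (n:ℝ) ^ (-(2*β)/(2*β+1)) := by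
      rw [h2l₀, ← Real.rpow_neg_one (n:ℝ), mul_assoc, ← Real.rpow_add hnpos]
      congr 2
      field_simp
      ring
    rw [e1, e1']
    linarith
  have htG₂ : ∑' l, G₂ l ≤ L ^ r * (1 - ρ₁)⁻¹ * (n:ℝ) ^ (-(2*β)/(2*β+1)) := by
    have e1 : ∑' l, G₂ l = c₁ * ρ₁ ^ (M+1) * (1 - ρ₁)⁻¹ :=
      my_tail_geom c₁ ρ₁ hρ₁0.le hρ₁1 (M+1)
    have e2 : ρ₁ ^ (M+1) ≤ (n:ℝ) ^ ((1/(2*β+1)) * (-(r*bp))) := by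
      have f1 : ρ₁ ^ (M+1) = (2:ℝ) ^ ((-(r*bp)) * (M+1 : ℕ)) := (hpow₁ (M+1)).symm
      rw [f1]
      have f2 : (2:ℝ) ^ ((-(r*bp)) * ((M+1 : ℕ):ℝ)) ≤ (2:ℝ) ^ ((-(r*bp)) * l₀) := by
        refine Real.rpow_le_rpow_of_exponent_le one_le_two ?_
        have : l₀ ≤ ((M+1 : ℕ):ℝ) := by push_cast; linarith
        nlinarith [mul_pos hr0 hbp0]
      refine f2.trans (le_of_eq ?_)
      rw [mul_comm, Real.rpow_mul (by norm_num : (0:ℝ) ≤ 2), h2l₀,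
        ← Real.rpow_mul hnpos.le]
    have e3 : c₁ * ρ₁ ^ (M+1) ≤ L ^ r * (n:ℝ) ^ (-(2*β)/(2*β+1)) := by
      calc c₁ * ρ₁ ^ (M+1) ≤ c₁ * ((n:ℝ) ^ ((1/(2*β+1)) * (-(r*bp)))) :=
            mul_le_mul_of_nonneg_left e2 hc₁0
        _ = L ^ r * (n:ℝ) ^ (-(2*β)/(2*β+1)) := by
            rw [hc₁, mul_assoc, ← Real.rpow_add hnpos]
            congr 2
            rw [hbp_def]
            field_simp
            ring
    rw [e1]
    calc c₁ * ρ₁ ^ (M+1) * (1 - ρ₁)⁻¹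
        ≤ (L ^ r * (n:ℝ) ^ (-(2*β)/(2*β+1))) * (1 - ρ₁)⁻¹ :=
          mul_le_mul_of_nonneg_right e3 h1ρ₁.le
      _ = L ^ r * (1 - ρ₁)⁻¹ * (n:ℝ) ^ (-(2*β)/(2*β+1)) := by ring
  have hS₁ : (∑' l : ℕ, ∑ k ∈ Finset.range (2^l),
      if (l:ℝ) ≤ J₁ ∧ |f₀ l k| ≤ 1/Real.sqrt n then (f₀ l k)^2 else 0)
      ≤ (2 + L ^ r * (1 - ρ₁)⁻¹) * (n:ℝ) ^ (-(2*β)/(2*β+1)) := by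
    calc (∑' l : ℕ, ∑ k ∈ Finset.range (2^l),
          if (l:ℝ) ≤ J₁ ∧ |f₀ l k| ≤ 1/Real.sqrt n then (f₀ l k)^2 else 0)
        ≤ ∑' l, (G₁ l + G₂ l) := Summable.tsum_le_tsum hpt hF₁s (hG₁s.add hG₂s)
      _ = (∑' l, G₁ l) + (∑' l, G₂ l) := Summable.tsum_add hG₁s hG₂s
      _ ≤ 2 * (n:ℝ) ^ (-(2*β)/(2*β+1))
            + L ^ r * (1 - ρ₁)⁻¹ * (n:ℝ) ^ (-(2*β)/(2*β+1)) := add_le_add htG₁ htG₂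
      _ = (2 + L ^ r * (1 - ρ₁)⁻¹) * (n:ℝ) ^ (-(2*β)/(2*β+1)) := by ring
  have hS₂' : (∑' l : ℕ, ∑ k ∈ Finset.range (2^l),
      if J₁ < (l:ℝ) then (f₀ l k)^2 else 0)
      ≤ (L ^ 2 * (1 - ρ₂)⁻¹) * (n:ℝ) ^ (-(2*β)/(2*β+1)) := by
    refine hS₂.trans ?_
    calc L^2 * ρ₂ ^ m₂ * (1 - ρ₂)⁻¹
        ≤ L^2 * ((n:ℝ) ^ (-(2*β)/(2*β+1))) * (1 - ρ₂)⁻¹ := by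
          refine mul_le_mul_of_nonneg_right ?_ h1ρ₂.le
          exact mul_le_mul_of_nonneg_left hρ₂m (by positivity)
      _ = (L ^ 2 * (1 - ρ₂)⁻¹) * (n:ℝ) ^ (-(2*β)/(2*β+1)) := by ring
  calc _ ≤ (2 + L ^ r * (1 - ρ₁)⁻¹) * (n:ℝ) ^ (-(2*β)/(2*β+1))
        + (L ^ 2 * (1 - ρ₂)⁻¹) * (n:ℝ) ^ (-(2*β)/(2*β+1)) := add_le_add hS₁ hS₂'
    _ = (2 + L ^ r * (1 - ρ₁)⁻¹ + L ^ 2 * (1 - ρ₂)⁻¹) * (n:ℝ) ^ (-(2*β)/(2*β+1)) := by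
        ring
end

section
/- Consider the normal model X | θ ~ N(θ, 1/n) with prior θ = σ ζ, where σ > 0 and ζ has density h on ℝ which is symmetric, positive, bounded, decreasing on [0,∞) and satisfies log(1/h(x)) ≤ c_1(1 + log^{1+κ}(1+x)) for x ≥ 0 and some c_1 > 0, κ ≥ 0. Then there exist constants C, C_1 > 0 such that for all t ∈ ℝ, θ_0 ∈ ℝ, σ > 0, the prior-posterior Laplace transform satisfies log E_{θ_0} E^π[exp(t √n (θ − X)) | X] ≤ t^2/2 + C log^{1+κ}(1 + (|θ_0| + 1/√n)/σ) + C_1, where E_{θ_0} is the expectation over X ~ N(θ_0, 1/n). -/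
open Real MeasureTheory

/-- The standard normal density. -/
noncomputable def stdGaussPdf (x : ℝ) : ℝ := Real.exp (-x ^ 2 / 2) / Real.sqrt (2 * Real.pi)


lemma sqrtTwoPi_pos : 0 < Real.sqrt (2 * Real.pi) := Real.sqrt_pos.2 (by positivity)

lemma stdGaussPdf_pos (x : ℝ) : 0 < stdGaussPdf x := div_pos (Real.exp_pos _) sqrtTwoPi_pos

lemma stdGaussPdf_cont : Continuous stdGaussPdf := by
  unfold stdGaussPdf; fun_prop

lemma stdGaussPdf_integrable : Integrable stdGaussPdf := by
  have h : Integrable (fun x : ℝ => Real.exp (-(1/2 : ℝ) * x ^ 2)) :=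
    integrable_exp_neg_mul_sq (by norm_num)
  have e : stdGaussPdf = fun x : ℝ => Real.exp (-(1/2 : ℝ) * x ^ 2) / Real.sqrt (2 * Real.pi) := by
    funext x; unfold stdGaussPdf; ring_nf
  rw [e]; exact h.div_const _

lemma stdGaussPdf_integral : ∫ x : ℝ, stdGaussPdf x = 1 := by
  have h : ∫ x : ℝ, Real.exp (-(1/2 : ℝ) * x ^ 2) = Real.sqrt (Real.pi / (1/2)) :=
    integral_gaussian (1/2)
  have e : stdGaussPdf = fun x : ℝ => Real.exp (-(1/2 : ℝ) * x ^ 2) / Real.sqrt (2 * Real.pi) := by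
    funext x; unfold stdGaussPdf; ring_nf
  rw [e, integral_div, h, show Real.pi / (1/2) = 2 * Real.pi by ring,
    div_self sqrtTwoPi_pos.ne']

lemma integrable_comp_add_right' (f : ℝ → ℝ) (c : ℝ) (hf : Integrable f) :
    Integrable (fun x : ℝ => f (x + c)) := by
  have h := (measurePreserving_add_right (volume : Measure ℝ) c).integrable_comp
    hf.aestronglyMeasurable
  exact h.2 hf

lemma stdGaussPdf_affine_integrable (a b : ℝ) (ha : a ≠ 0) :
    Integrable (fun x : ℝ => stdGaussPdf (a * x + b)) := by
  have h1 : Integrable (fun y : ℝ => stdGaussPdf (y + b)) :=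
    integrable_comp_add_right' stdGaussPdf b stdGaussPdf_integrable
  exact h1.comp_mul_left' ha

lemma stdGaussPdf_affine_integral (a b : ℝ) (ha : a ≠ 0) :
    ∫ x : ℝ, stdGaussPdf (a * x + b) = |a|⁻¹ := by
  have h1 : ∫ y : ℝ, stdGaussPdf (y + b) = 1 := by
    rw [integral_add_right_eq_self stdGaussPdf b]; exact stdGaussPdf_integral
  calc ∫ x : ℝ, stdGaussPdf (a * x + b)
      = |a⁻¹| • ∫ y : ℝ, stdGaussPdf (y + b) :=
        Measure.integral_comp_mul_left (fun y => stdGaussPdf (y + b)) a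
    _ = |a|⁻¹ := by rw [h1, smul_eq_mul, mul_one, abs_inv]

lemma gauss_shift (t u : ℝ) :
    Real.exp (-(t * u)) * stdGaussPdf u = Real.exp (t ^ 2 / 2) * stdGaussPdf (u + t) := by
  unfold stdGaussPdf
  rw [← mul_div_assoc, ← mul_div_assoc, ← Real.exp_add, ← Real.exp_add]
  congr 2
  ring

lemma gauss_ge_of_abs_le {u : ℝ} (hu : |u| ≤ 1) : stdGaussPdf 1 ≤ stdGaussPdf u := by
  unfold stdGaussPdf
  have h2 : u ^ 2 ≤ 1 := by
    have := abs_nonneg u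
    nlinarith [sq_abs u]
  have : Real.exp (-(1:ℝ) ^ 2 / 2) ≤ Real.exp (-u ^ 2 / 2) := by
    apply Real.exp_le_exp.2; nlinarith
  exact (div_le_div_iff_of_pos_right sqrtTwoPi_pos).2 this

lemma rpow_add_le_two_rpow (p q r : ℝ) (hp : 0 ≤ p) (hq : 0 ≤ q) (hr : 0 ≤ r) :
    (p + q) ^ r ≤ 2 ^ r * (p ^ r + q ^ r) := by
  have hm : p + q ≤ 2 * max p q := by
    rcases le_total p q with hc | hc
    · rw [max_eq_right hc]; linarith
    · rw [max_eq_left hc]; linarith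
  have hmax : 0 ≤ max p q := le_max_of_le_left hp
  calc (p + q) ^ r ≤ (2 * max p q) ^ r := Real.rpow_le_rpow (by linarith) hm hr
    _ = 2 ^ r * (max p q) ^ r := Real.mul_rpow (by norm_num) hmax
    _ ≤ 2 ^ r * (p ^ r + q ^ r) := by
        have : (max p q) ^ r ≤ p ^ r + q ^ r := by
          rcases max_choice p q with hc | hc <;> rw [hc]
          · nlinarith [Real.rpow_nonneg hq r]
          · nlinarith [Real.rpow_nonneg hp r]
        nlinarith [Real.rpow_nonneg (show (0:ℝ) ≤ 2 by norm_num) r]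

lemma log_rpow_le_linear (r w : ℝ) (hr : 1 ≤ r) (hw : 0 ≤ w) :
    Real.log (1 + w) ^ r ≤ r ^ r * (1 + w) := by
  have hr0 : 0 < r := lt_of_lt_of_le one_pos hr
  have h1w : (1:ℝ) ≤ 1 + w := by linarith
  have h1w0 : (0:ℝ) < 1 + w := by linarith
  have key : Real.log (1 + w) ≤ r * (1 + w) ^ r⁻¹ := by
    have e : Real.log (1 + w) = r * Real.log ((1 + w) ^ r⁻¹) := by
      rw [Real.log_rpow h1w0]; field_simp
    rw [e]
    have h2 := Real.log_le_sub_one_of_pos (x := (1 + w) ^ r⁻¹) (Real.rpow_pos_of_pos h1w0 _)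
    nlinarith [Real.rpow_nonneg h1w0.le r⁻¹]
  have hlog0 : 0 ≤ Real.log (1 + w) := Real.log_nonneg h1w
  calc Real.log (1 + w) ^ r ≤ (r * (1 + w) ^ r⁻¹) ^ r := Real.rpow_le_rpow hlog0 key hr0.le
    _ = r ^ r * ((1 + w) ^ r⁻¹) ^ r :=
        Real.mul_rpow hr0.le (Real.rpow_nonneg h1w0.le _)
    _ = r ^ r * (1 + w) := by
        rw [← Real.rpow_mul h1w0.le, inv_mul_cancel₀ hr0.ne', Real.rpow_one]

lemma div_ratio_aux (E H0 S c hv : ℝ) (hS : S ≠ 0) (hc : c ≠ 0) (hh : hv ≠ 0) :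
    (E * H0 / S) / (c * hv / S) = H0 / c * E * (1 / hv) := by
  field_simp

lemma step1_aux (S a e q p : ℝ) (hS : S ≠ 0) (hq : q ≠ 0) :
    S * a * e / q * ((2/S) * p) = a * e * (2 * p / q) := by
  field_simp

lemma pi_div_aux (S : ℝ) (hS : S ≠ 0) : Real.pi / (S^2/4) = (2/S)^2 * Real.pi := by
  field_simp
  ring

lemma lin_quad (c w : ℝ) : c * (1 + w) ≤ (c + c ^ 2) + w ^ 2 / 4 := by
  nlinarith [sq_nonneg (w / 2 - c)]

set_option maxHeartbeats 2000000

/-- Laplace transform bound for the posterior in the normal model `X | θ ~ N(θ, 1/n)` with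
heavy-tailed scale prior `θ = σζ`, `ζ` with density `h`:
`log E_{θ₀} E^π[exp(t√n(θ−X)) | X] ≤ t²/2 + C log^{1+κ}(1 + (|θ₀|+1/√n)/σ) + C₁`. -/
theorem posterior_laplace_transform_bound
    (h : ℝ → ℝ) (c₁ κ : ℝ) (hc₁ : 0 < c₁) (hκ : 0 ≤ κ)
    (hsymm : ∀ x, h (-x) = h x) (hpos : ∀ x, 0 < h x)
    (hbdd : ∃ M, ∀ x, h x ≤ M) (hmono : AntitoneOn h (Set.Ici 0))
    (hmeas : Measurable h)
    (htail : ∀ x : ℝ, 0 ≤ x → Real.log (1 / h x) ≤ c₁ * (1 + Real.log (1 + x) ^ (1 + κ))) :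
    ∃ C C₁ : ℝ, 0 < C ∧ 0 < C₁ ∧
      ∀ (t θ₀ σ : ℝ) (_ : 0 < σ) (n : ℕ) (_ : 1 ≤ n),
        Real.log (∫ x : ℝ,
            (Real.sqrt n * stdGaussPdf (Real.sqrt n * (x - θ₀))) *
              ((∫ θ : ℝ, Real.exp (t * Real.sqrt n * (θ - x)) *
                  stdGaussPdf (Real.sqrt n * (x - θ)) * h (θ / σ)) /
                (∫ θ : ℝ, stdGaussPdf (Real.sqrt n * (x - θ)) * h (θ / σ)))) ≤
          t ^ 2 / 2 +
            C * Real.log (1 + (|θ₀| + 1 / Real.sqrt n) / σ) ^ (1 + κ) + C₁ := by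
  obtain ⟨M, hM⟩ := hbdd
  have hM0 : 0 < M := lt_of_lt_of_le (hpos 0) (hM 0)
  set r : ℝ := 1 + κ with hrdef
  clear_value r
  have hr1 : 1 ≤ r := by rw [hrdef]; linarith
  have hr0 : 0 < r := lt_of_lt_of_le one_pos hr1
  have hh00 : 0 < h 0 := hpos 0
  set c₀ : ℝ := 2 * stdGaussPdf 1 with hc₀def
  clear_value c₀
  have hφ1 : 0 < stdGaussPdf 1 := stdGaussPdf_pos 1
  have hc₀0 : 0 < c₀ := by rw [hc₀def]; positivity
  set c₂ : ℝ := c₁ * 2 ^ r with hc₂def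
  clear_value c₂
  set C : ℝ := c₁ * 4 ^ r with hCdef
  clear_value C
  set c₃ : ℝ := c₂ * r ^ r with hc₃def
  clear_value c₃
  set K : ℝ := c₃ + c₃ ^ 2 with hKdef
  clear_value K
  have hc₂0 : 0 < c₂ := by
    rw [hc₂def]; exact mul_pos hc₁ (Real.rpow_pos_of_pos (by norm_num) _)
  have hC0 : 0 < C := by
    rw [hCdef]; exact mul_pos hc₁ (Real.rpow_pos_of_pos (by norm_num) _)
  have hc₃0 : 0 < c₃ := by
    rw [hc₃def]; exact mul_pos hc₂0 (Real.rpow_pos_of_pos hr0 _)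
  have hK0 : 0 < K := by rw [hKdef]; positivity
  set C₁ : ℝ := |Real.log (h 0 / c₀)| + c₁ + K + 1 with hC₁def
  clear_value C₁
  have hC₁0 : 0 < C₁ := by rw [hC₁def]; positivity
  refine ⟨C, C₁, hC0, hC₁0, ?_⟩
  intro t θ₀ σ hσ n hn
  have hσ0 : 0 ≤ σ := hσ.le
  have hn1 : (1:ℝ) ≤ (n:ℝ) := by exact_mod_cast hn
  set s : ℝ := Real.sqrt (n:ℝ) with hsdef
  have hs1 : 1 ≤ s := by
    rw [hsdef, show (1:ℝ) = Real.sqrt 1 by simp]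
    exact Real.sqrt_le_sqrt hn1
  clear_value s
  have hs0 : 0 < s := lt_of_lt_of_le one_pos hs1
  set B : ℝ := (|θ₀| + 1/s)/σ with hBdef
  have hB0 : 0 ≤ B := by
    rw [hBdef]
    exact div_nonneg (add_nonneg (abs_nonneg _) (one_div_nonneg.2 hs0.le)) hσ0
  clear_value B
  have hlogB0 : 0 ≤ Real.log (1 + B) := Real.log_nonneg (by linarith)
  set L : ℝ := Real.log (1 + B) ^ r with hLdef
  clear_value L
  have hL0 : 0 ≤ L := by rw [hLdef]; exact Real.rpow_nonneg hlogB0 _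
  set Num : ℝ → ℝ := fun x => ∫ θ : ℝ,
    Real.exp (t * s * (θ - x)) * stdGaussPdf (s * (x - θ)) * h (θ / σ) with hNum
  set Den : ℝ → ℝ := fun x => ∫ θ : ℝ, stdGaussPdf (s * (x - θ)) * h (θ / σ) with hDen
  have hfold : (∫ x : ℝ, s * stdGaussPdf (s * (x - θ₀)) *
      ((∫ θ : ℝ, Real.exp (t * s * (θ - x)) * stdGaussPdf (s * (x - θ)) * h (θ / σ)) /
        (∫ θ : ℝ, stdGaussPdf (s * (x - θ)) * h (θ / σ)))) =
      ∫ x : ℝ, s * stdGaussPdf (s * (x - θ₀)) * (Num x / Den x) := by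
    simp only [hNum, hDen]
  clear_value Num Den
  rw [hfold]
  -- h helpers
  have hh0 : ∀ y : ℝ, h y ≤ h 0 := by
    intro y
    rcases le_total 0 y with hy | hy
    · exact hmono (Set.mem_Ici.2 le_rfl) (Set.mem_Ici.2 hy) hy
    · rw [← hsymm y]
      exact hmono (Set.mem_Ici.2 le_rfl) (Set.mem_Ici.2 (by linarith)) (by linarith)
  have hhanti : ∀ y z : ℝ, |y| ≤ z → h z ≤ h y := by
    intro y z hyz
    have hz0 : 0 ≤ z := le_trans (abs_nonneg y) hyz
    have h1 : h z ≤ h |y| := hmono (Set.mem_Ici.2 (abs_nonneg y)) (Set.mem_Ici.2 hz0) hyz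
    rcases le_total 0 y with hy | hy
    · rwa [abs_of_nonneg hy] at h1
    · rw [abs_of_nonpos hy] at h1; rwa [hsymm] at h1
  -- denominator : integrability
  have hDint : ∀ x : ℝ, Integrable (fun θ : ℝ => stdGaussPdf (s * (x - θ)) * h (θ / σ)) := by
    intro x
    have hg : Integrable (fun θ : ℝ => M * stdGaussPdf (-s * θ + s * x)) :=
      (stdGaussPdf_affine_integrable (-s) (s * x) (neg_ne_zero.2 hs0.ne')).const_mul M
    refine hg.mono' ?_ ?_
    · exact ((stdGaussPdf_cont.comp (by fun_prop)).aestronglyMeasurable.mul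
        (hmeas.comp (measurable_id.div_const σ)).aestronglyMeasurable)
    · filter_upwards with θ
      rw [Real.norm_eq_abs, abs_of_nonneg (mul_nonneg (stdGaussPdf_pos _).le (hpos _).le)]
      rw [show s * (x - θ) = -s * θ + s * x by ring, mul_comm M]
      exact mul_le_mul_of_nonneg_left (hM _) (stdGaussPdf_pos _).le
  -- denominator : lower bound
  have hDlb : ∀ x : ℝ, c₀ * h ((|x| + 1/s)/σ) / s ≤ Den x := by
    intro x
    have hvol : (volume (Set.Icc (x - 1/s) (x + 1/s))).toReal = 2 / s := by
      rw [Real.volume_Icc, show x + 1/s - (x - 1/s) = 2/s by ring,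
        ENNReal.toReal_ofReal (div_pos two_pos hs0).le]
    have hconst : ∀ θ ∈ Set.Icc (x - 1/s) (x + 1/s),
        stdGaussPdf 1 * h ((|x| + 1/s)/σ) ≤ stdGaussPdf (s * (x - θ)) * h (θ / σ) := by
      intro θ hθ
      obtain ⟨ha1, ha2⟩ := hθ
      have habs : |x - θ| ≤ 1/s := abs_le.2 ⟨by linarith, by linarith⟩
      have hg : stdGaussPdf 1 ≤ stdGaussPdf (s * (x - θ)) := by
        apply gauss_ge_of_abs_le
        rw [abs_mul, abs_of_pos hs0]
        calc s * |x - θ| ≤ s * (1/s) := mul_le_mul_of_nonneg_left habs hs0.le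
          _ = 1 := by field_simp
      have hhle : h ((|x| + 1/s)/σ) ≤ h (θ / σ) := by
        apply hhanti
        rw [abs_div, abs_of_pos hσ]
        gcongr
        calc |θ| = |x + (θ - x)| := by ring_nf
          _ ≤ |x| + |θ - x| := abs_add_le _ _
          _ ≤ |x| + 1/s := by rw [abs_sub_comm]; linarith
      exact mul_le_mul hg hhle (hpos _).le (stdGaussPdf_pos _).le
    have h1 : stdGaussPdf 1 * h ((|x| + 1/s)/σ) * (2 / s) ≤
        ∫ θ in Set.Icc (x - 1/s) (x + 1/s), stdGaussPdf (s * (x - θ)) * h (θ / σ) := by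
      have h2 := setIntegral_ge_of_const_le measurableSet_Icc
        (measure_Icc_lt_top).ne hconst ((hDint x).integrableOn)
      rw [measureReal_def, hvol, smul_eq_mul] at h2; linarith
    have h3 : (∫ θ in Set.Icc (x - 1/s) (x + 1/s), stdGaussPdf (s * (x - θ)) * h (θ / σ)) ≤ Den x := by
      rw [hDen]
      exact setIntegral_le_integral (hDint x)
        (Filter.Eventually.of_forall fun θ => mul_nonneg (stdGaussPdf_pos _).le (hpos _).le)
    calc c₀ * h ((|x| + 1/s)/σ) / s = stdGaussPdf 1 * h ((|x| + 1/s)/σ) * (2/s) := by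
          rw [hc₀def]; ring
      _ ≤ Den x := le_trans h1 h3
  have hDpos : ∀ x : ℝ, 0 < Den x := by
    intro x
    exact lt_of_lt_of_le (div_pos (mul_pos hc₀0 (hpos _)) hs0) (hDlb x)
  -- numerator
  have hNnn : ∀ x : ℝ, 0 ≤ Num x := by
    intro x
    rw [hNum]
    exact integral_nonneg fun θ =>
      mul_nonneg (mul_nonneg (Real.exp_pos _).le (stdGaussPdf_pos _).le) (hpos _).le
  have hNub : ∀ x : ℝ, Num x ≤ Real.exp (t^2/2) * h 0 / s := by
    intro x
    have hgint : Integrable (fun θ : ℝ =>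
        (Real.exp (t^2/2) * h 0) * stdGaussPdf (-s * θ + (s * x + t))) :=
      (stdGaussPdf_affine_integrable (-s) (s*x+t) (neg_ne_zero.2 hs0.ne')).const_mul _
    have hptw : ∀ θ : ℝ, Real.exp (t * s * (θ - x)) * stdGaussPdf (s * (x - θ)) * h (θ / σ)
        ≤ (Real.exp (t^2/2) * h 0) * stdGaussPdf (-s * θ + (s * x + t)) := by
      intro θ
      calc Real.exp (t*s*(θ-x)) * stdGaussPdf (s*(x-θ)) * h (θ/σ)
          = (Real.exp (-(t * (s*(x-θ)))) * stdGaussPdf (s*(x-θ))) * h (θ/σ) := by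
            rw [show t*s*(θ-x) = -(t * (s*(x-θ))) by ring]
        _ = (Real.exp (t^2/2) * stdGaussPdf (s*(x-θ) + t)) * h (θ/σ) := by rw [gauss_shift]
        _ ≤ (Real.exp (t^2/2) * stdGaussPdf (s*(x-θ) + t)) * h 0 :=
            mul_le_mul_of_nonneg_left (hh0 _)
              (mul_nonneg (Real.exp_pos _).le (stdGaussPdf_pos _).le)
        _ = (Real.exp (t^2/2) * h 0) * stdGaussPdf (-s * θ + (s * x + t)) := by
            rw [show s*(x-θ) + t = -s*θ + (s*x+t) by ring]; ring
    have hstep : Num x ≤ ∫ θ : ℝ, (Real.exp (t^2/2) * h 0) * stdGaussPdf (-s * θ + (s * x + t)) := by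
      rw [hNum]
      exact integral_mono_of_nonneg
        (Filter.Eventually.of_forall fun θ => mul_nonneg
          (mul_nonneg (Real.exp_pos _).le (stdGaussPdf_pos _).le) (hpos _).le)
        hgint (Filter.Eventually.of_forall hptw)
    calc Num x ≤ ∫ θ : ℝ, (Real.exp (t^2/2) * h 0) * stdGaussPdf (-s * θ + (s * x + t)) := hstep
      _ = (Real.exp (t^2/2) * h 0) * |(-s)|⁻¹ := by
          rw [integral_const_mul, stdGaussPdf_affine_integral _ _ (neg_ne_zero.2 hs0.ne')]
      _ = Real.exp (t^2/2) * h 0 / s := by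
          rw [abs_neg, abs_of_pos hs0]; ring
  -- exponent bound
  have hexp : ∀ x : ℝ, c₁ * (1 + Real.log (1 + (|x| + 1/s)/σ) ^ r)
      ≤ c₁ + C * L + K + s^2 * (x - θ₀)^2 / 4 := by
    intro x
    set w : ℝ := s * |x - θ₀| with hw
    clear_value w
    have hw0 : 0 ≤ w := by rw [hw]; exact mul_nonneg hs0.le (abs_nonneg _)
    have hax : (|x| + 1/s)/σ ≤ B + w * B := by
      have h1 : |x| ≤ |θ₀| + |x - θ₀| := by
        calc |x| = |θ₀ + (x - θ₀)| := by ring_nf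
          _ ≤ |θ₀| + |x - θ₀| := abs_add_le _ _
      have h2 : (|x| + 1/s)/σ ≤ (|θ₀| + |x - θ₀| + 1/s)/σ := by gcongr
      have h3 : (|θ₀| + |x - θ₀| + 1/s)/σ = B + |x - θ₀|/σ := by rw [hBdef]; ring
      have h4 : |x - θ₀|/σ ≤ w * B := by
        have h5 : |x - θ₀|/σ = w * (1/(s*σ)) := by
          rw [hw]
          rcases eq_or_ne σ 0 with hcase | hcase
          · simp [hcase]
          · field_simp
        have h6 : 1/(s*σ) ≤ B := by
          rw [hBdef, show 1/(s*σ) = (1/s)/σ by rw [div_div]]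
          gcongr
          linarith [abs_nonneg θ₀]
        rw [h5]
        exact mul_le_mul_of_nonneg_left h6 hw0
      linarith
    have hax0 : (0:ℝ) ≤ (|x| + 1/s)/σ :=
      div_nonneg (add_nonneg (abs_nonneg _) (one_div_nonneg.2 hs0.le)) hσ0
    have hp1 : 1 + (|x| + 1/s)/σ ≤ (1 + B)^2 * (1 + w) := by nlinarith
    have hlogax0 : 0 ≤ Real.log (1 + (|x| + 1/s)/σ) := Real.log_nonneg (by linarith)
    have hlogw0 : 0 ≤ Real.log (1 + w) := Real.log_nonneg (by linarith)
    have h1B : (0:ℝ) < 1 + B := by linarith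
    have h1w : (0:ℝ) < 1 + w := by linarith
    have hp2 : Real.log (1 + (|x| + 1/s)/σ) ≤ 2 * Real.log (1 + B) + Real.log (1 + w) := by
      calc Real.log (1 + (|x| + 1/s)/σ) ≤ Real.log ((1 + B)^2 * (1 + w)) :=
            Real.log_le_log (by linarith) hp1
        _ = 2 * Real.log (1 + B) + Real.log (1 + w) := by
            rw [Real.log_mul (pow_pos h1B 2).ne' h1w.ne', Real.log_pow]
            push_cast; ring
    have hp3 : Real.log (1 + (|x| + 1/s)/σ) ^ r ≤ 4 ^ r * L + 2 ^ r * Real.log (1 + w) ^ r := by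
      calc Real.log (1 + (|x| + 1/s)/σ) ^ r ≤ (2 * Real.log (1+B) + Real.log (1+w)) ^ r :=
            Real.rpow_le_rpow hlogax0 hp2 hr0.le
        _ ≤ 2 ^ r * ((2 * Real.log (1+B)) ^ r + Real.log (1+w) ^ r) :=
            rpow_add_le_two_rpow _ _ _ (mul_nonneg (by norm_num) hlogB0) hlogw0 hr0.le
        _ = 2 ^ r * (2 ^ r * L + Real.log (1+w) ^ r) := by
            rw [Real.mul_rpow (by norm_num) hlogB0, hLdef]
        _ = (2 ^ r * 2 ^ r) * L + 2 ^ r * Real.log (1+w) ^ r := by ring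
        _ = 4 ^ r * L + 2 ^ r * Real.log (1+w) ^ r := by
            rw [← Real.mul_rpow (by norm_num) (by norm_num)]
            norm_num
    have hp4 : Real.log (1 + w) ^ r ≤ r ^ r * (1 + w) := log_rpow_le_linear r w hr1 hw0
    have hp5 : w ^ 2 = s^2 * (x - θ₀)^2 := by rw [hw, mul_pow, sq_abs]
    calc c₁ * (1 + Real.log (1 + (|x| + 1/s)/σ) ^ r)
        = c₁ + c₁ * Real.log (1 + (|x| + 1/s)/σ) ^ r := by ring
      _ ≤ c₁ + c₁ * (4 ^ r * L + 2 ^ r * Real.log (1 + w) ^ r) := by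
          have := mul_le_mul_of_nonneg_left hp3 hc₁.le
          linarith
      _ = c₁ + C * L + c₂ * Real.log (1 + w) ^ r := by rw [hCdef, hc₂def]; ring
      _ ≤ c₁ + C * L + c₂ * (r ^ r * (1 + w)) := by
          have := mul_le_mul_of_nonneg_left hp4 hc₂0.le
          linarith
      _ = c₁ + C * L + c₃ * (1 + w) := by rw [hc₃def]; ring
      _ ≤ c₁ + C * L + K + w^2/4 := by
          rw [hKdef]
          have := lin_quad c₃ w
          linarith
      _ = c₁ + C * L + K + s^2 * (x - θ₀)^2 / 4 := by rw [hp5]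
  -- ratio bound
  set A : ℝ := h 0 / c₀ * Real.exp (t^2/2) with hA
  clear_value A
  have hA0 : 0 < A := by
    rw [hA]; exact mul_pos (div_pos hh00 hc₀0) (Real.exp_pos _)
  have hRub : ∀ x : ℝ, Num x / Den x ≤ A * Real.exp (c₁ + C * L + K + s^2*(x - θ₀)^2/4) := by
    intro x
    have hpa := hpos ((|x| + 1/s)/σ)
    have hax0 : (0:ℝ) ≤ (|x| + 1/s)/σ :=
      div_nonneg (add_nonneg (abs_nonneg _) (one_div_nonneg.2 hs0.le)) hσ0
    have h1 : Num x / Den x ≤ (Real.exp (t^2/2) * h 0 / s) / (c₀ * h ((|x| + 1/s)/σ) / s) :=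
      div_le_div₀ (div_nonneg (mul_nonneg (Real.exp_pos _).le hh00.le) hs0.le)
        (hNub x) (div_pos (mul_pos hc₀0 hpa) hs0) (hDlb x)
    have h2 : (Real.exp (t^2/2) * h 0 / s) / (c₀ * h ((|x| + 1/s)/σ) / s)
        = A * (1 / h ((|x| + 1/s)/σ)) := by
      rw [hA]
      exact div_ratio_aux _ _ _ _ _ hs0.ne' hc₀0.ne' hpa.ne'
    have h3 : 1 / h ((|x| + 1/s)/σ) ≤ Real.exp (c₁ * (1 + Real.log (1 + (|x| + 1/s)/σ) ^ r)) := by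
      rw [← Real.exp_log (one_div_pos.2 hpa)]
      exact Real.exp_le_exp.2 (htail _ hax0)
    calc Num x / Den x ≤ A * (1 / h ((|x| + 1/s)/σ)) := h1.trans_eq h2
      _ ≤ A * Real.exp (c₁ * (1 + Real.log (1 + (|x| + 1/s)/σ) ^ r)) :=
          mul_le_mul_of_nonneg_left h3 hA0.le
      _ ≤ A * Real.exp (c₁ + C * L + K + s^2*(x - θ₀)^2/4) :=
          mul_le_mul_of_nonneg_left (Real.exp_le_exp.2 (hexp x)) hA0.le
  -- the dominating function and its integral
  set g : ℝ → ℝ := fun x =>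
    s * stdGaussPdf (s * (x - θ₀)) * (A * Real.exp (c₁ + C*L + K + s^2*(x-θ₀)^2/4)) with hgdef
  clear_value g
  have hgeq : g = fun x => (s * A * Real.exp (c₁ + C*L + K) / Real.sqrt (2*Real.pi)) *
      Real.exp (-(s^2/4) * (x - θ₀)^2) := by
    rw [hgdef]
    funext x
    simp only [stdGaussPdf]
    rw [Real.exp_add (c₁ + C*L + K)]
    rw [show Real.exp (-(s^2/4) * (x - θ₀)^2) =
      Real.exp (-(s*(x-θ₀))^2/2) * Real.exp (s^2*(x-θ₀)^2/4) by
        rw [← Real.exp_add]; congr 1; ring]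
    ring
  have hgint : Integrable g := by
    rw [hgeq]
    apply Integrable.const_mul
    have h1 : Integrable (fun y : ℝ => Real.exp (-(s^2/4) * y^2)) :=
      integrable_exp_neg_mul_sq (div_pos (pow_pos hs0 2) (by norm_num))
    have h2 := integrable_comp_add_right' _ (-θ₀) h1
    simpa [sub_eq_add_neg] using h2
  have hgival : ∫ x : ℝ, g x =
      s * A * Real.exp (c₁ + C*L + K) / Real.sqrt (2*Real.pi) * ((2/s) * Real.sqrt Real.pi) := by
    rw [hgeq, integral_const_mul]
    congr 1
    have h3 : (∫ x : ℝ, Real.exp (-(s^2/4) * (x - θ₀)^2)) =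
        ∫ y : ℝ, Real.exp (-(s^2/4) * y^2) := by
      have h4 := integral_add_right_eq_self (μ := volume) (fun y : ℝ => Real.exp (-(s^2/4) * y^2)) (-θ₀)
      simpa [sub_eq_add_neg] using h4
    rw [h3, integral_gaussian]
    rw [pi_div_aux s hs0.ne']
    rw [Real.sqrt_mul (sq_nonneg _), Real.sqrt_sq (div_nonneg (by norm_num) hs0.le)]
  -- outer comparison
  have hIle : (∫ x : ℝ, s * stdGaussPdf (s * (x - θ₀)) * (Num x / Den x)) ≤ ∫ x : ℝ, g x :=
    integral_mono_of_nonneg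
      (Filter.Eventually.of_forall fun x => mul_nonneg
        (mul_nonneg hs0.le (stdGaussPdf_pos _).le) (div_nonneg (hNnn x) (hDpos x).le))
      hgint
      (Filter.Eventually.of_forall fun x => by
        simp only [hgdef]
        exact mul_le_mul_of_nonneg_left (hRub x)
          (mul_nonneg hs0.le (stdGaussPdf_pos _).le))
  -- final numeric bound
  have hsqrtpi : 0 < Real.sqrt Real.pi := Real.sqrt_pos.2 Real.pi_pos
  have hfinal : (∫ x : ℝ, g x) ≤ Real.exp (t^2/2 + C*L + C₁) := by
    rw [hgival]
    have hfrac : 2 * Real.sqrt Real.pi / Real.sqrt (2*Real.pi) ≤ 2 := by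
      rw [div_le_iff₀ sqrtTwoPi_pos]
      have hle : Real.sqrt Real.pi ≤ Real.sqrt (2 * Real.pi) :=
        Real.sqrt_le_sqrt (by linarith [Real.pi_pos])
      linarith
    have step1 : s * A * Real.exp (c₁ + C*L + K) / Real.sqrt (2*Real.pi) * ((2/s) * Real.sqrt Real.pi)
        = A * Real.exp (c₁ + C*L + K) * (2 * Real.sqrt Real.pi / Real.sqrt (2*Real.pi)) :=
      step1_aux _ _ _ _ _ hs0.ne' sqrtTwoPi_pos.ne'
    rw [step1]
    have step2 : A * Real.exp (c₁ + C*L + K) * (2 * Real.sqrt Real.pi / Real.sqrt (2*Real.pi))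
        ≤ A * Real.exp (c₁ + C*L + K) * 2 :=
      mul_le_mul_of_nonneg_left hfrac (mul_nonneg hA0.le (Real.exp_pos _).le)
    refine le_trans step2 ?_
    have e1 : h 0 / c₀ = Real.exp (Real.log (h 0 / c₀)) := (Real.exp_log (div_pos hh00 hc₀0)).symm
    have h2e : (2:ℝ) ≤ Real.exp 1 := by
      have := Real.add_one_le_exp (1:ℝ)
      linarith
    have hA2 : h 0 / c₀ * 2 ≤ Real.exp (|Real.log (h 0 / c₀)| + 1) := by
      rw [Real.exp_add]
      refine mul_le_mul ?_ h2e (by norm_num) (Real.exp_pos _).le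
      calc h 0 / c₀ = Real.exp (Real.log (h 0 / c₀)) := e1
        _ ≤ Real.exp |Real.log (h 0 / c₀)| := Real.exp_le_exp.2 (le_abs_self _)
    calc A * Real.exp (c₁ + C*L + K) * 2
        = (h 0 / c₀ * 2) * (Real.exp (t^2/2) * Real.exp (c₁ + C*L + K)) := by rw [hA]; ring
      _ ≤ Real.exp (|Real.log (h 0 / c₀)| + 1) * (Real.exp (t^2/2) * Real.exp (c₁ + C*L + K)) :=
          mul_le_mul_of_nonneg_right hA2 (mul_nonneg (Real.exp_pos _).le (Real.exp_pos _).le)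
      _ = Real.exp (|Real.log (h 0 / c₀)| + 1 + (t^2/2 + (c₁ + C*L + K))) := by
          rw [← Real.exp_add, ← Real.exp_add]
      _ ≤ Real.exp (t^2/2 + C*L + C₁) := by
          apply Real.exp_le_exp.2
          rw [hC₁def]
          linarith
  -- conclude
  have hInn : 0 ≤ ∫ x : ℝ, s * stdGaussPdf (s * (x - θ₀)) * (Num x / Den x) :=
    integral_nonneg fun x => mul_nonneg
      (mul_nonneg hs0.le (stdGaussPdf_pos _).le) (div_nonneg (hNnn x) (hDpos x).le)
  rcases hInn.lt_or_eq with hI | hI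
  · exact (Real.log_le_iff_le_exp hI).2 (le_trans hIle hfinal)
  · rw [← hI, Real.log_zero]
    have hCL : 0 ≤ C * L := mul_nonneg hC0.le hL0
    have ht2 : 0 ≤ t^2 := sq_nonneg t
    linarith
end

section
/- Let X_k ~ N(f_{0,k}, 1/n) independently for k ≥ 1, and let N ⊂ ℕ be a set of indices such that |f_{0,k}| ≤ 1/√n for all k ∉ N. Define events A_{k,j} = {|X_k| ≤ √(4 log(n (j² ∨ 1))/n)}, and A_n = ∩_{K_n < k ≤ n, k ∉ N} A_{k,0} ∩ ∩_{j≥1} ∩_{jn < k ≤ (j+1)n, k ∉ N} A_{k,j}. Then for large enough n, P(A_n^c) ≤ C/√n for a universal constant C. -/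
open Real MeasureTheory ProbabilityTheory Set
open scoped NNReal ENNReal

lemma my_gauss_tail_Ici (m : ℝ) (v : ℝ≥0) (hv : v ≠ 0) {s : ℝ} (hs : 1 ≤ s) :
    gaussianReal m v (Set.Ici (m + s * Real.sqrt v)) ≤ ENNReal.ofReal (Real.exp (-s^2/2)) := by
  have hvpos : (0:ℝ) < (v:ℝ) := by exact_mod_cast pos_iff_ne_zero.2 hv
  set σ : ℝ := Real.sqrt v with hσ
  have hσpos : 0 < σ := Real.sqrt_pos.2 hvpos
  have hσsq : σ ^ 2 = (v : ℝ) := Real.sq_sqrt v.coe_nonneg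
  set a : ℝ := m + s * σ with ha
  set b : ℝ := s / σ with hb
  have hbpos : 0 < b := div_pos (lt_of_lt_of_le one_pos hs) hσpos
  set c : ℝ := (Real.sqrt (2 * π * v))⁻¹ * Real.exp (-s^2/2) with hc
  have h2πv : (0:ℝ) < 2 * π * v := by positivity
  have hcpos : 0 < c := mul_pos (inv_pos.2 (Real.sqrt_pos.2 h2πv)) (Real.exp_pos _)
  -- pointwise bound
  have hpt : ∀ x ∈ Set.Ici a, gaussianPDFReal m v x ≤ c * Real.exp (-(b * (x - a))) := by
    intro x hx
    have hxa : a ≤ x := hx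
    have key : rexp (- (x - m)^2 / (2*(v:ℝ))) ≤ rexp (-s^2/2) * rexp (-(b*(x-a))) := by
      rw [← Real.exp_add, Real.exp_le_exp]
      have h1 : (x - m) ^ 2 = (x - a) ^ 2 + 2 * s * σ * (x - a) + s ^ 2 * σ ^ 2 := by
        have h2 : x - m = (x - a) + s * σ := by rw [ha]; ring
        rw [h2]; ring
      have hb2 : b * σ = s := div_mul_cancel₀ s (ne_of_gt hσpos)
      have hv2 : (0:ℝ) < 2 * v := by positivity
      have h3 : b*(x-a)*(2*(v:ℝ)) = 2*s*σ*(x-a) := by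
        rw [← hσsq, hb]; field_simp
      have h4 : s^2*σ^2 = s^2*(v:ℝ) := by rw [hσsq]
      rw [div_le_iff₀ hv2]
      have expand : (-s^2/2 + -(b*(x-a)))*(2*(v:ℝ)) = -s^2*(v:ℝ) - 2*s*σ*(x-a) := by
        linear_combination -h3
      rw [expand]
      nlinarith [h1, h4, sq_nonneg (x - a)]
    calc gaussianPDFReal m v x = (Real.sqrt (2 * π * v))⁻¹ * rexp (- (x - m)^2 / (2*(v:ℝ))) := rfl
      _ ≤ (Real.sqrt (2 * π * v))⁻¹ * (rexp (-s^2/2) * rexp (-(b*(x-a)))) :=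
          mul_le_mul_of_nonneg_left key (inv_nonneg.2 (Real.sqrt_nonneg _))
      _ = c * rexp (-(b*(x-a))) := by rw [hc]; ring
  -- integrability of the dominating function
  have hgeq : (fun x => c * rexp (-(b*(x-a)))) = fun x => (c * rexp (b*a)) * rexp (-b*x) := by
    funext x
    rw [show -(b*(x-a)) = b*a + -b*x from by ring, Real.exp_add]
    ring
  have hg : IntegrableOn (fun x => c * rexp (-(b*(x-a)))) (Set.Ici a) := by
    rw [hgeq, integrableOn_Ici_iff_integrableOn_Ioi]
    exact (exp_neg_integrableOn_Ioi a hbpos).const_mul _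
  have hInt1 : IntegrableOn (gaussianPDFReal m v) (Set.Ici a) :=
    (integrable_gaussianPDFReal m v).integrableOn
  have hmono : ∫ x in Set.Ici a, gaussianPDFReal m v x
      ≤ ∫ x in Set.Ici a, c * rexp (-(b*(x-a))) :=
    setIntegral_mono_on hInt1 hg measurableSet_Ici hpt
  have hcomp : ∫ x in Set.Ioi a, rexp (-(b*x)) = b⁻¹ * rexp (-(b*a)) := by
    have := integral_comp_mul_left_Ioi (fun y => rexp (-y)) a hbpos
    simp only [smul_eq_mul] at this
    rw [this, integral_exp_neg_Ioi]
  have hval : ∫ x in Set.Ici a, c * rexp (-(b*(x-a))) = c * b⁻¹ := by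
    rw [hgeq, integral_Ici_eq_integral_Ioi, integral_const_mul]
    have h5 : (fun x => rexp (-b*x)) = fun x => rexp (-(b*x)) := by
      funext x; congr 1; ring
    rw [h5, hcomp, show c * rexp (b*a) * (b⁻¹ * rexp (-(b*a))) =
      c * b⁻¹ * (rexp (b*a) * rexp (-(b*a))) from by ring, ← Real.exp_add]
    simp
  have hfinal : c * b⁻¹ ≤ rexp (-s^2/2) := by
    have h1 : c * b⁻¹ = rexp (-s^2/2) * ((Real.sqrt (2*π))⁻¹ * s⁻¹) := by
      rw [hc, hb]
      have : Real.sqrt (2 * π * v) = Real.sqrt (2*π) * σ := by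
        rw [hσ, ← Real.sqrt_mul (by positivity)]
      rw [this, inv_div, mul_inv]
      field_simp
    rw [h1]
    nth_rewrite 2 [← mul_one (rexp (-s^2/2))]
    apply mul_le_mul_of_nonneg_left _ (Real.exp_nonneg _)
    have h2 : (1:ℝ) ≤ Real.sqrt (2*π) := by
      rw [show (1:ℝ) = Real.sqrt 1 by simp]
      exact Real.sqrt_le_sqrt (by nlinarith [Real.pi_gt_three])
    calc (Real.sqrt (2*π))⁻¹ * s⁻¹ ≤ 1 * 1 := by
          apply mul_le_mul
          · rw [inv_le_one_iff₀]; right; exact h2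
          · rw [inv_le_one_iff₀]; right; exact hs
          · positivity
          · norm_num
      _ = 1 := by norm_num
  rw [gaussianReal_apply_eq_integral _ hv]
  exact ENNReal.ofReal_le_ofReal (le_trans hmono (le_trans (le_of_eq hval) hfinal))

lemma my_gauss_tail_Iic (m : ℝ) (v : ℝ≥0) (hv : v ≠ 0) {s : ℝ} (hs : 1 ≤ s) :
    gaussianReal m v (Set.Iic (m - s * Real.sqrt v)) ≤ ENNReal.ofReal (Real.exp (-s^2/2)) := by
  have hone : (⟨(-1:ℝ)^2, sq_nonneg _⟩ : ℝ≥0) = 1 := by ext; norm_num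
  have hmap : (gaussianReal m v).map (fun x => (-1:ℝ) * x) = gaussianReal (-m) v := by
    rw [gaussianReal_map_const_mul]
    congr 1
    · ring
    · ext; simp
  have hset : Set.Iic (m - s * Real.sqrt v)
      = (fun x => (-1:ℝ)*x) ⁻¹' (Set.Ici (-m + s * Real.sqrt v)) := by
    ext x
    simp only [Set.mem_Iic, Set.mem_preimage, Set.mem_Ici]
    constructor <;> intro h <;> linarith
  rw [hset, ← Measure.map_apply (by fun_prop : Measurable (fun x : ℝ => (-1:ℝ) * x)) measurableSet_Ici, hmap]
  exact my_gauss_tail_Ici (-m) v hv hs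

lemma my_abs_tail {Ω : Type*} [MeasurableSpace Ω] (μ : Measure Ω) (X : Ω → ℝ)
    (hX : Measurable X) (m : ℝ) (v : ℝ≥0) (hv : v ≠ 0)
    (hlaw : Measure.map X μ = gaussianReal m v) {s t : ℝ} (hs : 1 ≤ s)
    (hts : |m| + s * Real.sqrt v ≤ t) :
    μ {ω | t < |X ω|} ≤ ENNReal.ofReal (2 * Real.exp (-s^2/2)) := by
  have hm1 : m ≤ |m| := le_abs_self m
  have hm2 : -|m| ≤ m := neg_abs_le m
  have hsub : {ω | t < |X ω|} ⊆ X ⁻¹' (Set.Ici (m + s * Real.sqrt v))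
      ∪ X ⁻¹' (Set.Iic (m - s * Real.sqrt v)) := by
    intro ω hω
    have hω' : t < |X ω| := hω
    have h := lt_abs.1 hω'
    rcases h with h | h
    · left; simp only [Set.mem_preimage, Set.mem_Ici]; linarith
    · right; simp only [Set.mem_preimage, Set.mem_Iic]; linarith
  calc μ {ω | t < |X ω|} ≤ μ (X ⁻¹' (Set.Ici (m + s * Real.sqrt v))
        ∪ X ⁻¹' (Set.Iic (m - s * Real.sqrt v))) := measure_mono hsub
    _ ≤ μ (X ⁻¹' (Set.Ici (m + s * Real.sqrt v)))
        + μ (X ⁻¹' (Set.Iic (m - s * Real.sqrt v))) := measure_union_le _ _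
    _ ≤ ENNReal.ofReal (Real.exp (-s^2/2)) + ENNReal.ofReal (Real.exp (-s^2/2)) := by
        apply add_le_add
        · rw [← Measure.map_apply hX measurableSet_Ici, hlaw]
          exact my_gauss_tail_Ici m v hv hs
        · rw [← Measure.map_apply hX measurableSet_Iic, hlaw]
          exact my_gauss_tail_Iic m v hv hs
    _ = ENNReal.ofReal (2 * Real.exp (-s^2/2)) := by
        rw [← ENNReal.ofReal_add (Real.exp_nonneg _) (Real.exp_nonneg _)]
        congr 1; ring

lemma my_key_ineq {L : ℝ} (hL : 16 ≤ L) : Real.sqrt (3*L) + 1 ≤ 2 * Real.sqrt L := by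
  have h4 : (4:ℝ) ≤ Real.sqrt L := by
    rw [show (4:ℝ) = Real.sqrt 16 by
      rw [show (16:ℝ) = 4^2 by norm_num, Real.sqrt_sq (by norm_num)]]
    exact Real.sqrt_le_sqrt hL
  have h3 : Real.sqrt (3*L) ≤ 1.74 * Real.sqrt L := by
    rw [Real.sqrt_mul (by norm_num) L]
    apply mul_le_mul_of_nonneg_right _ (Real.sqrt_nonneg L)
    nlinarith [Real.sq_sqrt (show (0:ℝ) ≤ 3 by norm_num), Real.sqrt_nonneg 3]
  nlinarith

lemma my_prob_bound {Ω : Type*} [MeasurableSpace Ω] (μ : Measure Ω) (X : Ω → ℝ)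
    (hX : Measurable X) (m : ℝ) (n : ℕ) (hn : 1 ≤ n)
    (hlaw : Measure.map X μ = gaussianReal m (1/n))
    (hm : |m| ≤ 1 / Real.sqrt n) {M : ℝ} (hM : (n:ℝ) ≤ M) (hlog : 16 ≤ Real.log n) :
    μ {ω | Real.sqrt (4 * Real.log M / n) < |X ω|}
      ≤ ENNReal.ofReal (2 * Real.exp (-(3 * Real.log M)/2)) := by
  have hn0 : (0:ℝ) < n := by exact_mod_cast hn
  set L := Real.log M with hLdef
  have hL : 16 ≤ L := le_trans hlog (Real.log_le_log hn0 hM)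
  have hL0 : (0:ℝ) ≤ 3 * L := by linarith
  have hv : (1/(n:ℝ≥0)) ≠ 0 := by
    simp only [ne_eq, one_div, inv_eq_zero, Nat.cast_eq_zero]
    omega
  have hs : (1:ℝ) ≤ Real.sqrt (3*L) := by
    rw [show (1:ℝ) = Real.sqrt 1 by simp]
    exact Real.sqrt_le_sqrt (by linarith)
  have hsn : (0:ℝ) < Real.sqrt n := Real.sqrt_pos.2 hn0
  have hvc : ((1/(n:ℝ≥0) : ℝ≥0) : ℝ) = 1/(n:ℝ) := by push_cast; ring
  have hsqv : Real.sqrt ((1/(n:ℝ≥0) : ℝ≥0) : ℝ) = 1 / Real.sqrt n := by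
    rw [hvc, one_div, Real.sqrt_inv, one_div]
  have hthresh : Real.sqrt (4 * L / n) = 2 * Real.sqrt L / Real.sqrt n := by
    rw [Real.sqrt_div (by positivity) (n:ℝ), show (4:ℝ) * L = 2^2 * L by norm_num,
      Real.sqrt_mul (by norm_num) L, Real.sqrt_sq (by norm_num)]
  have hts : |m| + Real.sqrt (3*L) * Real.sqrt ((1/(n:ℝ≥0) : ℝ≥0) : ℝ)
      ≤ Real.sqrt (4 * L / n) := by
    rw [hsqv, hthresh]
    have key := my_key_ineq hL
    calc |m| + Real.sqrt (3*L) * (1 / Real.sqrt n)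
        ≤ 1 / Real.sqrt n + Real.sqrt (3*L) * (1 / Real.sqrt n) := by linarith
      _ = (1 + Real.sqrt (3*L)) / Real.sqrt n := by ring
      _ ≤ (2 * Real.sqrt L) / Real.sqrt n := by
          gcongr
          linarith
  have h := my_abs_tail μ X hX m (1/(n:ℝ≥0)) hv hlaw hs hts
  rwa [Real.sq_sqrt hL0, show -(3*L)/2 = -(3*L)/2 from rfl] at h

/-- In the Gaussian sequence model `X_k ~ N(f₀_k, 1/n)` with `|f₀_k| ≤ 1/√n` off a set
`N` of indices, the event `A_n` (all thresholded observations small blockwise) has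
complement probability at most `C/√n` for large `n`. -/
theorem event_An_complement_prob
    {Ω : Type*} [MeasurableSpace Ω] (μ : Measure Ω) [IsProbabilityMeasure μ]
    (f₀ : ℕ → ℝ) (N : ℕ → Set ℕ) (K : ℕ → ℕ) (hK : ∀ n, K n ≤ n)
    (X : ℕ → ℕ → Ω → ℝ) (hXmeas : ∀ n k, Measurable (X n k))
    (hindep : ∀ n, iIndepFun (X n) μ)
    (hlaw : ∀ n k, 1 ≤ n → Measure.map (X n k) μ = gaussianReal (f₀ k) (1 / n))
    (hsmall : ∀ n k, 1 ≤ n → k ∉ N n → |f₀ k| ≤ 1 / Real.sqrt n) :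
    ∃ C : ℝ, 0 < C ∧ ∃ n₀ : ℕ, ∀ n : ℕ, n₀ ≤ n →
      μ ({ω : Ω |
          (∀ k : ℕ, K n < k → k ≤ n → k ∉ N n →
            |X n k ω| ≤ Real.sqrt (4 * Real.log n / n)) ∧
          (∀ j : ℕ, 1 ≤ j → ∀ k : ℕ, j * n < k → k ≤ (j + 1) * n → k ∉ N n →
            |X n k ω| ≤ Real.sqrt (4 * Real.log (n * j ^ 2) / n))}ᶜ) ≤
        ENNReal.ofReal (C / Real.sqrt n) := by
  classical
  set S₃ : ℝ := ∑' j : ℕ, 1/((j:ℝ)+1)^3 with hS₃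
  have hsummable : Summable (fun j : ℕ => 1/((j:ℝ)+1)^3) := by
    have h := (Real.summable_one_div_nat_pow (p := 3)).2 (by norm_num)
    have h2 := (summable_nat_add_iff (f := fun j : ℕ => 1/(j:ℝ)^3) 1).2 h
    convert h2 using 2 with j
    · rfl
    push_cast
    ring
  have hS₃nonneg : 0 ≤ S₃ := tsum_nonneg (fun j => by positivity)
  refine ⟨4 + 2*S₃, by linarith, 10^7, fun n hn => ?_⟩
  have hn1 : 1 ≤ n := le_trans (by norm_num) hn
  have hn0 : 0 < n := hn1
  have hn0R : (0:ℝ) < n := by exact_mod_cast hn0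
  have hlog : 16 ≤ Real.log n := by
    rw [Real.le_log_iff_exp_le hn0R]
    calc rexp 16 = rexp 1 ^ (16:ℕ) := by
          rw [← Real.exp_nat_mul]; norm_num
      _ ≤ 2.7182818286^(16:ℕ) := pow_le_pow_left₀ (Real.exp_pos 1).le Real.exp_one_lt_d9.le 16
      _ ≤ 10^7 := by norm_num
      _ ≤ n := by exact_mod_cast hn
  -- the exceptional events
  set E : ℕ → Set Ω := fun k =>
    if K n < k ∧ k ≤ n ∧ k ∉ N n then
      {ω | Real.sqrt (4 * Real.log n / n) < |X n k ω|}
    else if n < k ∧ k ∉ N n then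
      {ω | Real.sqrt (4 * Real.log ((n:ℝ) * (((k-1)/n : ℕ):ℝ) ^ 2) / n) < |X n k ω|}
    else ∅ with hE
  -- inclusion in the union
  have hsub : ({ω : Ω |
          (∀ k : ℕ, K n < k → k ≤ n → k ∉ N n →
            |X n k ω| ≤ Real.sqrt (4 * Real.log n / n)) ∧
          (∀ j : ℕ, 1 ≤ j → ∀ k : ℕ, j * n < k → k ≤ (j + 1) * n → k ∉ N n →
            |X n k ω| ≤ Real.sqrt (4 * Real.log (n * j ^ 2) / n))}ᶜ) ⊆ ⋃ k, E k := by
    intro ω hω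
    simp only [Set.mem_compl_iff, Set.mem_setOf_eq] at hω
    rw [not_and_or] at hω
    rcases hω with hω | hω
    · push_neg at hω
      obtain ⟨k, hk1, hk2, hk3, hk4⟩ := hω
      refine Set.mem_iUnion.2 ⟨k, ?_⟩
      simp only [hE]
      rw [if_pos ⟨hk1, hk2, hk3⟩]
      exact hk4
    · push_neg at hω
      obtain ⟨j, hj1, k, hk1, hk2, hk3, hk4⟩ := hω
      have hkn : n < k := lt_of_le_of_lt (Nat.le_mul_of_pos_left n hj1) hk1
      have hjk : (k-1)/n = j := by
        apply Nat.div_eq_of_lt_le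
        · omega
        · have : k - 1 < k := Nat.sub_lt (by omega) one_pos
          calc k - 1 < k := this
            _ ≤ (j+1) * n := hk2
      refine Set.mem_iUnion.2 ⟨k, ?_⟩
      simp only [hE]
      rw [if_neg (fun h => absurd h.2.1 (not_le.2 hkn)), if_pos ⟨hkn, hk3⟩]
      show Real.sqrt (4 * Real.log ((n:ℝ) * (((k-1)/n : ℕ):ℝ) ^ 2) / n) < |X n k ω|
      rw [hjk]
      exact hk4
  -- bound for each event
  set B : ℕ → ℝ := fun k => if k ≤ n then 2 * (n:ℝ)^(-(3/2):ℝ)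
    else 2 * (n:ℝ)^(-(3/2):ℝ) / ((((k-1)/n : ℕ)):ℝ)^3 with hB
  have hrpow : ∀ M : ℝ, 0 < M → 2 * Real.exp (-(3 * Real.log M)/2) = 2 * M^(-(3/2):ℝ) := by
    intro M hM
    rw [Real.rpow_def_of_pos hM]
    congr 1
    congr 1
    ring
  have hμE : ∀ k, μ (E k) ≤ ENNReal.ofReal (B k) := by
    intro k
    simp only [hE, hB]
    by_cases h1 : K n < k ∧ k ≤ n ∧ k ∉ N n
    · rw [if_pos h1, if_pos h1.2.1]
      have h := my_prob_bound μ (X n k) (hXmeas n k) (f₀ k) n hn1 (hlaw n k hn1)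
        (hsmall n k hn1 h1.2.2) (le_refl (n:ℝ)) hlog
      rwa [hrpow (n:ℝ) hn0R] at h
    · rw [if_neg h1]
      by_cases h2 : n < k ∧ k ∉ N n
      · rw [if_pos h2, if_neg (not_le.2 h2.1)]
        set j : ℕ := (k-1)/n with hj
        have hj1 : 1 ≤ j := by
          rw [hj]
          rw [Nat.one_le_div_iff hn0]
          omega
        have hj1R : (1:ℝ) ≤ (j:ℝ) := by exact_mod_cast hj1
        have hj2 : (1:ℝ) ≤ (j:ℝ)^2 := by nlinarith
        have hj0 : (0:ℝ) < (j:ℝ) := by linarith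
        have hM : (n:ℝ) ≤ (n:ℝ) * (j:ℝ)^2 := by nlinarith [hn0R]
        have hMpos : (0:ℝ) < (n:ℝ) * (j:ℝ)^2 := by positivity
        have h := my_prob_bound μ (X n k) (hXmeas n k) (f₀ k) n hn1 (hlaw n k hn1)
          (hsmall n k hn1 h2.2) hM hlog
        rw [hrpow _ hMpos] at h
        refine le_trans h (le_of_eq ?_)
        congr 1
        rw [Real.mul_rpow hn0R.le (by positivity)]
        rw [show ((j:ℝ)^2) = (j:ℝ)^((2:ℕ):ℝ) by rw [Real.rpow_natCast]]
        rw [← Real.rpow_mul hj0.le]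
        norm_num
        ring
      · rw [if_neg h2]
        simp only [measure_empty]
        exact zero_le
  -- summation
  have hn1R : (1:ℝ) ≤ (n:ℝ) := by exact_mod_cast hn1
  have hXn : (0:ℝ) ≤ (n:ℝ)^(-(3/2):ℝ) := Real.rpow_nonneg hn0R.le _
  have hnn : (n:ℝ) * (n:ℝ)^(-(3/2):ℝ) = 1 / Real.sqrt n := by
    rw [show (n:ℝ) * (n:ℝ)^(-(3/2):ℝ) = (n:ℝ)^(1:ℝ) * (n:ℝ)^(-(3/2):ℝ) by rw [Real.rpow_one],
      ← Real.rpow_add hn0R, show (1:ℝ) + -(3/2) = -(1/2) by norm_num,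
      Real.rpow_neg hn0R.le, one_div, Real.sqrt_eq_rpow]
    norm_num
  have hhead : ∑ k ∈ Finset.range (n+1), ENNReal.ofReal (B k)
      ≤ ENNReal.ofReal (4 / Real.sqrt n) := by
    have hBv : ∀ k ∈ Finset.range (n+1),
        ENNReal.ofReal (B k) = ENNReal.ofReal (2 * (n:ℝ)^(-(3/2):ℝ)) := by
      intro k hk
      simp only [hB]
      rw [if_pos (Nat.lt_succ_iff.1 (Finset.mem_range.1 hk))]
    rw [Finset.sum_congr rfl hBv, Finset.sum_const, Finset.card_range, nsmul_eq_mul,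
      show ((n+1:ℕ):ℝ≥0∞) = ENNReal.ofReal ((n+1:ℕ):ℝ) from (ENNReal.ofReal_natCast _).symm,
      ← ENNReal.ofReal_mul (by positivity)]
    apply ENNReal.ofReal_le_ofReal
    push_cast
    have hkey : ((n:ℝ)+1) * (2 * (n:ℝ)^(-(3/2):ℝ)) ≤ 4 / Real.sqrt n := by
      calc ((n:ℝ)+1) * (2 * (n:ℝ)^(-(3/2):ℝ))
          ≤ 2*(n:ℝ) * (2 * (n:ℝ)^(-(3/2):ℝ)) :=
            mul_le_mul_of_nonneg_right (by linarith) (by positivity)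
        _ = 4 * ((n:ℝ) * (n:ℝ)^(-(3/2):ℝ)) := by ring
        _ = 4 * (1 / Real.sqrt n) := by rw [hnn]
        _ = 4 / Real.sqrt n := by ring
    linarith [hkey]
  have htail : ∑' i, ENNReal.ofReal (B (i + (n+1)))
      ≤ ENNReal.ofReal (2 * S₃ / Real.sqrt n) := by
    set g : ℕ → ℝ≥0∞ := fun j => ENNReal.ofReal (2 * (n:ℝ)^(-(3/2):ℝ) / ((j:ℝ)+1)^3) with hg
    have hBi : ∀ i, ENNReal.ofReal (B (i + (n+1))) = g (i/n) := by
      intro i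
      simp only [hB, hg]
      rw [if_neg (by omega)]
      have hdiv : (i + (n+1) - 1)/n = i/n + 1 := by
        rw [show i + (n+1) - 1 = i + n by omega, Nat.add_div_right i hn0]
      rw [hdiv]
      congr 1
      push_cast
      ring
    rw [tsum_congr hBi]
    haveI : NeZero n := ⟨by omega⟩
    have hEqv : ∑' i : ℕ, g (i/n) = ∑' p : ℕ × Fin n, g p.1 :=
      Equiv.tsum_eq (Nat.divModEquiv n) (fun p => g p.1)
    rw [hEqv, ENNReal.tsum_prod (f := fun a (_ : Fin n) => g a)]
    have hfin : ∀ a : ℕ, ∑' _ : Fin n, g a = (n : ℝ≥0∞) * g a := by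
      intro a
      rw [tsum_fintype]
      simp [Finset.sum_const, nsmul_eq_mul]
    rw [tsum_congr hfin, ENNReal.tsum_mul_left]
    have hga : ∀ a : ℕ, g a
        = ENNReal.ofReal (2 * (n:ℝ)^(-(3/2):ℝ)) * ENNReal.ofReal (1/((a:ℝ)+1)^3) := by
      intro a
      rw [hg, ← ENNReal.ofReal_mul (by positivity)]
      congr 1
      ring
    rw [tsum_congr hga, ENNReal.tsum_mul_left,
      ← ENNReal.ofReal_tsum_of_nonneg (fun a => by positivity) hsummable, ← hS₃,
      show ((n:ℕ):ℝ≥0∞) = ENNReal.ofReal ((n:ℕ):ℝ) from (ENNReal.ofReal_natCast n).symm,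
      ← ENNReal.ofReal_mul (by positivity), ← ENNReal.ofReal_mul (by positivity)]
    apply le_of_eq
    congr 1
    rw [show (n:ℝ)*(2 * (n:ℝ)^(-(3/2):ℝ) * S₃) = 2*S₃*((n:ℝ)*(n:ℝ)^(-(3/2):ℝ)) by ring, hnn]
    ring
  calc μ ({ω : Ω |
          (∀ k : ℕ, K n < k → k ≤ n → k ∉ N n →
            |X n k ω| ≤ Real.sqrt (4 * Real.log n / n)) ∧
          (∀ j : ℕ, 1 ≤ j → ∀ k : ℕ, j * n < k → k ≤ (j + 1) * n → k ∉ N n →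
            |X n k ω| ≤ Real.sqrt (4 * Real.log (n * j ^ 2) / n))}ᶜ)
      ≤ μ (⋃ k, E k) := measure_mono hsub
    _ ≤ ∑' k, μ (E k) := measure_iUnion_le E
    _ ≤ ∑' k, ENNReal.ofReal (B k) := ENNReal.tsum_le_tsum hμE
    _ = ∑ k ∈ Finset.range (n+1), ENNReal.ofReal (B k)
        + ∑' i, ENNReal.ofReal (B (i + (n+1))) :=
        (Summable.sum_add_tsum_nat_add' (f := fun k => ENNReal.ofReal (B k)) (k := n+1)
          ENNReal.summable).symm
    _ ≤ ENNReal.ofReal (4 / Real.sqrt n) + ENNReal.ofReal (2 * S₃ / Real.sqrt n) :=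
        add_le_add hhead htail
    _ = ENNReal.ofReal ((4 + 2*S₃) / Real.sqrt n) := by
        rw [← ENNReal.ofReal_add (by positivity) (by positivity)]
        congr 1
        ring
end

section
/- Let H be a probability distribution on ℝ with density h symmetric, positive, bounded and decreasing on [0,∞), with tail H̄(x) = ∫_x^∞ h(u)du ≤ c_2/x² for x ≥ 1. Fix a > 0, δ > 0 and σ_k = exp(−a (log k)^{1+δ}) for k ≥ 2. Then for any D > 0 there exist constants C, K_0 such that for all K ≥ K_0 and all ε ≥ D K^{-β} (β > 0 fixed): ∏_{k > K} (1 − 2 H̄(ε / (D σ_k √k log k))) ≥ exp(−C e^{−a (log K)^{1+δ}}); in particular this product is bounded below by a positive constant independent of K. -/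
open Real

set_option maxHeartbeats 2000000 in
/-- High-frequency prior-mass factor for the oversmoothed heavy-tailed (OT) series prior:
with `σ_k = exp(−a (log k)^{1+δ})` and tail `H̄(x) ≤ c₂/x²` for `x ≥ 1`,
`∏_{k>K} (1 − 2H̄(ε/(D σ_k √k log k))) ≥ exp(−C e^{−a (log K)^{1+δ}})`, which is in
particular bounded below by a positive constant independent of `K`. -/
theorem OT_highfreq_prior_mass
    (h : ℝ → ℝ) (c₂ a δ β : ℝ) (hc₂ : 0 < c₂) (ha : 0 < a) (hδ : 0 < δ) (hβ : 0 < β)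
    (hsymm : ∀ x, h (-x) = h x) (hpos : ∀ x, 0 < h x)
    (hbdd : ∃ M, ∀ x, h x ≤ M) (hmono : AntitoneOn h (Set.Ici 0))
    (hmeas : Measurable h) (hprob : ∫ x : ℝ, h x = 1)
    (htail : ∀ x : ℝ, 1 ≤ x → (∫ u in Set.Ioi x, h u) ≤ c₂ / x ^ 2) :
    ∀ D : ℝ, 0 < D → ∃ C : ℝ, 0 < C ∧ ∃ c : ℝ, 0 < c ∧ ∃ K₀ : ℕ, 2 ≤ K₀ ∧
      ∀ K : ℕ, K₀ ≤ K → ∀ ε : ℝ, D * (K : ℝ) ^ (-β) ≤ ε →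
        (∏' k : ℕ, (if K < k then
            1 - 2 * (∫ u in Set.Ioi (ε / (D * Real.exp (-a * Real.log k ^ (1 + δ)) *
              Real.sqrt k * Real.log k)), h u)
          else 1)) ≥ Real.exp (-C * Real.exp (-a * Real.log K ^ (1 + δ))) ∧
        (∏' k : ℕ, (if K < k then
            1 - 2 * (∫ u in Set.Ioi (ε / (D * Real.exp (-a * Real.log k ^ (1 + δ)) *
              Real.sqrt k * Real.log k)), h u)
          else 1)) ≥ c := by
  intro D hD
  set N : ℝ := 2 * β + 7 with hNdef
  have hN : 0 < N := by positivity
  set R : ℝ := max 1 ((N / a) ^ (1 / δ)) with hRdef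
  refine ⟨12 * c₂, by positivity, Real.exp (-(12 * c₂)), Real.exp_pos _,
    max 3 (max (⌈Real.exp R⌉₊) (⌈4 * c₂⌉₊)), le_trans (by norm_num) (le_max_left _ _), ?_⟩
  intro K hK ε hε
  set E : ℝ := Real.exp (-a * Real.log K ^ (1 + δ)) with hEdef
  have hKK : (3:ℕ) ≤ K := le_trans (le_max_left _ _) hK
  have hlogK0 : 0 ≤ Real.log K := Real.log_nonneg (by exact_mod_cast Nat.one_le_of_lt hKK)
  have hE1 : E ≤ 1 := by
    rw [hEdef]
    apply Real.exp_le_one_iff.mpr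
    have : (0:ℝ) ≤ Real.log K ^ (1 + δ) := Real.rpow_nonneg hlogK0 _
    nlinarith
  have hE0 : 0 < E := Real.exp_pos _
  -- main per-k facts
  set F : ℕ → ℝ := fun k => if K < k then
      1 - 2 * (∫ u in Set.Ioi (ε / (D * Real.exp (-a * Real.log k ^ (1 + δ)) *
        Real.sqrt k * Real.log k)), h u)
    else 1 with hFdef
  have key : ∀ k : ℕ, K < k →
      0 < F k ∧ F k ≤ 1 ∧ -(4 * c₂ * E * ((k:ℝ)^2)⁻¹) ≤ Real.log (F k) := by
    intro k hk
    have hkK0 : (max 3 (max (⌈Real.exp R⌉₊) (⌈4 * c₂⌉₊))) < k := lt_of_le_of_lt hK hk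
    have hk3 : 3 < k := lt_of_le_of_lt (le_max_left _ _) hkK0
    have hk1R : (1:ℝ) ≤ (k:ℝ) := by exact_mod_cast Nat.one_le_of_lt hk3
    have hkexpR : Real.exp R ≤ (k:ℝ) := by
      have h1 : Real.exp R ≤ (⌈Real.exp R⌉₊ : ℝ) := Nat.le_ceil _
      have h2 : (⌈Real.exp R⌉₊ : ℝ) ≤ (k:ℝ) := by
        exact_mod_cast le_of_lt (lt_of_le_of_lt (le_trans (le_max_left _ _) (le_max_right _ _)) hkK0)
      linarith
    have hk4c : 4 * c₂ ≤ (k:ℝ) := by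
      have h1 : 4 * c₂ ≤ (⌈4 * c₂⌉₊ : ℝ) := Nat.le_ceil _
      have h2 : (⌈4 * c₂⌉₊ : ℝ) ≤ (k:ℝ) := by
        exact_mod_cast le_of_lt (lt_of_le_of_lt (le_trans (le_max_right _ _) (le_max_right _ _)) hkK0)
      linarith
    set L : ℝ := Real.log k with hLdef
    have hLR : R ≤ L := by
      calc R = Real.log (Real.exp R) := (Real.log_exp R).symm
        _ ≤ L := Real.log_le_log (Real.exp_pos _) hkexpR
    have hL1 : 1 ≤ L := le_trans (le_max_left _ _) hLR
    have hL0 : 0 < L := lt_of_lt_of_le one_pos hL1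
    -- a * L ^ δ ≥ N
    have haL : N ≤ a * L ^ δ := by
      have h1 : (N / a) ^ (1/δ) ≤ L := le_trans (le_max_right _ _) hLR
      have h2 : ((N / a) ^ (1/δ)) ^ δ ≤ L ^ δ :=
        Real.rpow_le_rpow (Real.rpow_nonneg (by positivity) _) h1 hδ.le
      rw [← Real.rpow_mul (by positivity), one_div_mul_cancel hδ.ne', Real.rpow_one] at h2
      rw [div_le_iff₀ ha] at h2
      linarith [h2]
    have hL1δ : L ^ (1 + δ) = L * L ^ δ := by
      rw [Real.rpow_add hL0, Real.rpow_one]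
    have hLδ0 : 0 ≤ L ^ δ := Real.rpow_nonneg hL0.le _
    -- the point x
    set σ : ℝ := Real.exp (-a * L ^ (1 + δ)) with hσdef
    set den : ℝ := D * σ * Real.sqrt k * L with hdendef
    have hden0 : 0 < den := by
      have : 0 < Real.sqrt k := Real.sqrt_pos.mpr (by linarith)
      positivity
    set x : ℝ := ε / den with hxdef
    -- den ≤ D * exp(2L - a L^{1+δ})
    have hexpL : Real.exp L = (k:ℝ) := by
      rw [hLdef]; exact Real.exp_log (by linarith)
    have hsqrt : Real.sqrt k ≤ Real.exp L := by
      have h1 : Real.sqrt (k:ℝ) ≤ Real.sqrt ((k:ℝ)^2) := Real.sqrt_le_sqrt (by nlinarith)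
      rw [Real.sqrt_sq (by linarith : (0:ℝ) ≤ (k:ℝ))] at h1
      rw [hexpL]; exact h1
    have hLexp : L ≤ Real.exp L := by linarith [Real.add_one_le_exp L]
    have hden_le : den ≤ D * Real.exp (2 * L - a * L ^ (1 + δ)) := by
      have hEE : Real.exp (2 * L - a * L ^ (1 + δ)) = σ * (Real.exp L * Real.exp L) := by
        rw [hσdef, ← Real.exp_add, ← Real.exp_add]; congr 1; ring
      have hσ0 : 0 < σ := Real.exp_pos _
      have h2 : Real.sqrt (k:ℝ) * L ≤ Real.exp L * Real.exp L :=
        mul_le_mul hsqrt hLexp (by linarith) (Real.exp_pos L).le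
      calc den = (D * σ) * (Real.sqrt (k:ℝ) * L) := by rw [hdendef]; ring
        _ ≤ (D * σ) * (Real.exp L * Real.exp L) :=
            mul_le_mul_of_nonneg_left h2 (by positivity)
        _ = D * Real.exp (2 * L - a * L ^ (1 + δ)) := by rw [hEE]; ring
    -- ε ≥ D * exp (-β L)
    have hεk : D * Real.exp (-β * L) ≤ ε := by
      have h1 : Real.exp (-β * L) = (k:ℝ) ^ (-β) := by
        rw [Real.rpow_def_of_pos (by linarith : (0:ℝ) < (k:ℝ))]
        congr 1
        rw [hLdef]; ring
      have h2 : (k:ℝ) ^ (-β) ≤ (K:ℝ) ^ (-β) := by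
        apply Real.rpow_le_rpow_of_nonpos
        · exact_mod_cast lt_of_lt_of_le (by norm_num) hKK
        · exact_mod_cast hk.le
        · linarith
      calc D * Real.exp (-β * L) = D * (k:ℝ) ^ (-β) := by rw [h1]
        _ ≤ D * (K:ℝ) ^ (-β) := by nlinarith
        _ ≤ ε := hε
    -- lower bound for x
    set y : ℝ := Real.exp (a * L ^ (1 + δ) - (β + 2) * L) with hydef
    have hy0 : 0 < y := Real.exp_pos _
    have hyx : y ≤ x := by
      rw [hxdef, le_div_iff₀ hden0]
      calc y * den ≤ y * (D * Real.exp (2 * L - a * L ^ (1 + δ))) :=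
            mul_le_mul_of_nonneg_left hden_le hy0.le
        _ = D * Real.exp (-β * L) := by
            rw [hydef, show ∀ s u : ℝ, Real.exp s * (D * Real.exp u) = D * Real.exp (s + u) from
              fun s u => by rw [Real.exp_add]; ring]
            congr 1; ring
        _ ≤ ε := hεk
    have hy1 : 1 ≤ y := by
      rw [hydef]
      apply Real.one_le_exp
      have : (β + 2) * L ≤ a * L ^ (1 + δ) := by
        rw [hL1δ]
        calc (β + 2) * L ≤ N * L := by nlinarith
          _ ≤ (a * L ^ δ) * L := by nlinarith
          _ = a * (L * L ^ δ) := by ring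
      linarith
    have hx1 : 1 ≤ x := le_trans hy1 hyx
    -- tail bound
    have hHx : (∫ u in Set.Ioi x, h u) ≤ c₂ * ((k:ℝ)^2)⁻¹ * Real.exp (-a * L ^ (1 + δ)) := by
      have h1 : (∫ u in Set.Ioi x, h u) ≤ c₂ / x ^ 2 := htail x hx1
      have h2 : c₂ / x ^ 2 ≤ c₂ / y ^ 2 := by
        apply div_le_div_of_nonneg_left hc₂.le (by positivity)
        nlinarith
      have h3 : c₂ / y ^ 2 = c₂ * Real.exp ((2*β + 4) * L - 2 * (a * L ^ (1 + δ))) := by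
        rw [hydef, sq, ← Real.exp_add, div_eq_mul_inv, ← Real.exp_neg]
        congr 1; ring
      have h4 : Real.exp ((2*β + 4) * L - 2 * (a * L ^ (1 + δ)))
          ≤ Real.exp (-2 * L) * Real.exp (-a * L ^ (1 + δ)) := by
        rw [← Real.exp_add]
        apply Real.exp_le_exp.mpr
        have : (2*β + 6) * L ≤ a * L ^ (1 + δ) := by
          rw [hL1δ]
          calc (2*β + 6) * L ≤ N * L := by nlinarith
            _ ≤ (a * L ^ δ) * L := by nlinarith
            _ = a * (L * L ^ δ) := by ring
        linarith
      have hexpL : Real.exp L = (k:ℝ) := by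
        rw [hLdef]; exact Real.exp_log (by linarith)
      have h5 : Real.exp (-2 * L) = ((k:ℝ)^2)⁻¹ := by
        rw [show (-2 : ℝ) * L = -(2 * L) by ring, Real.exp_neg]
        congr 1
        rw [show (2:ℝ) * L = L + L by ring, Real.exp_add, hexpL]
        ring
      calc (∫ u in Set.Ioi x, h u) ≤ c₂ / y ^ 2 := le_trans h1 h2
        _ = c₂ * Real.exp ((2*β + 4) * L - 2 * (a * L ^ (1 + δ))) := h3
        _ ≤ c₂ * (Real.exp (-2 * L) * Real.exp (-a * L ^ (1 + δ))) := by nlinarith [Real.exp_pos ((2*β + 4) * L - 2 * (a * L ^ (1 + δ)))]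
        _ = c₂ * ((k:ℝ)^2)⁻¹ * Real.exp (-a * L ^ (1 + δ)) := by rw [h5]; ring
    -- exp(-a L^{1+δ}) ≤ E
    have hEk : Real.exp (-a * L ^ (1 + δ)) ≤ E := by
      rw [hEdef]
      apply Real.exp_le_exp.mpr
      have hKk : Real.log K ≤ L := Real.log_le_log (by exact_mod_cast lt_of_lt_of_le (by norm_num) hKK) (by exact_mod_cast hk.le)
      have : Real.log K ^ (1 + δ) ≤ L ^ (1 + δ) := Real.rpow_le_rpow hlogK0 hKk (by linarith)
      nlinarith
    have hk2inv : (0:ℝ) < ((k:ℝ)^2)⁻¹ := by positivity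
    have hHnn : 0 ≤ (∫ u in Set.Ioi x, h u) :=
      MeasureTheory.setIntegral_nonneg measurableSet_Ioi (fun u _ => (hpos u).le)
    set t : ℝ := 2 * c₂ * ((k:ℝ)^2)⁻¹ * E with htdef
    have hHt : 2 * (∫ u in Set.Ioi x, h u) ≤ t := by
      have hc2k : (0:ℝ) ≤ c₂ * ((k:ℝ)^2)⁻¹ := by positivity
      have h6 := mul_le_mul_of_nonneg_left hEk hc2k
      rw [htdef]
      nlinarith [hHx, h6]
    have ht0 : 0 ≤ t := by positivity
    have ht12 : t ≤ 1/2 := by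
      rw [htdef]
      have hk2 : 4 * c₂ ≤ (k:ℝ)^2 := by nlinarith
      rw [mul_comm (2 * c₂ * ((k:ℝ)^2)⁻¹) E]
      have hi : ((k:ℝ)^2)⁻¹ ≤ (4*c₂)⁻¹ := by
        apply inv_anti₀ (by positivity) hk2
      calc E * (2 * c₂ * ((k:ℝ)^2)⁻¹) ≤ 1 * (2 * c₂ * ((k:ℝ)^2)⁻¹) := by
            apply mul_le_mul_of_nonneg_right hE1 (by positivity)
        _ ≤ 1 * (2 * c₂ * (4*c₂)⁻¹) := by
            have := mul_le_mul_of_nonneg_left hi (by positivity : (0:ℝ) ≤ 2 * c₂)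
            linarith
        _ = 1/2 := by field_simp; ring
    have hFk : F k = 1 - 2 * (∫ u in Set.Ioi x, h u) := by
      rw [hFdef]
      simp only [hk, if_true]
      rfl
    have hexp2t : Real.exp (-(2 * t)) ≤ 1 - t := by
      have hme : Real.exp (-(2 * t)) * Real.exp (2 * t) = 1 := by
        rw [← Real.exp_add]; simp
      have hu0 : (0:ℝ) < Real.exp (-(2 * t)) := Real.exp_pos _
      have h1 : Real.exp (-(2 * t)) * (2 * t + 1) ≤ 1 := by
        have h2 : 2 * t + 1 ≤ Real.exp (2 * t) := by linarith [Real.add_one_le_exp (2 * t)]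
        calc Real.exp (-(2 * t)) * (2 * t + 1)
            ≤ Real.exp (-(2 * t)) * Real.exp (2 * t) :=
              mul_le_mul_of_nonneg_left h2 hu0.le
          _ = 1 := hme
      have h3 : (1:ℝ) ≤ (1 - t) * (2 * t + 1) := by
        have h5 : (1 - t) * (2 * t + 1) = 1 + t * (1 - 2 * t) := by ring
        have h6 : (0:ℝ) ≤ t * (1 - 2 * t) :=
          mul_nonneg ht0 (by linarith)
        rw [h5]; linarith
      have h4 : Real.exp (-(2 * t)) * (2 * t + 1) ≤ (1 - t) * (2 * t + 1) := le_trans h1 h3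
      exact le_of_mul_le_mul_right h4 (by linarith)
    have hF_ge : Real.exp (-(2 * t)) ≤ F k := by
      rw [hFk]; linarith
    have hF0 : 0 < F k := lt_of_lt_of_le (Real.exp_pos _) hF_ge
    have hF1 : F k ≤ 1 := by rw [hFk]; linarith
    refine ⟨hF0, hF1, ?_⟩
    have := (Real.le_log_iff_exp_le hF0).mpr hF_ge
    calc -(4 * c₂ * E * ((k:ℝ)^2)⁻¹) = -(2 * t) := by rw [htdef]; ring
      _ ≤ Real.log (F k) := this
  -- global facts
  have hFtriv : ∀ k : ℕ, ¬ (K < k) → F k = 1 := by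
    intro k hk; rw [hFdef]; simp [hk]
  have hFpos : ∀ k : ℕ, 0 < F k := by
    intro k
    by_cases hk : K < k
    · exact (key k hk).1
    · rw [hFtriv k hk]; norm_num
  have hFle1 : ∀ k : ℕ, F k ≤ 1 := by
    intro k
    by_cases hk : K < k
    · exact (key k hk).2.1
    · rw [hFtriv k hk]
  set g : ℕ → ℝ := fun k => if K < k then ((k:ℝ)^2)⁻¹ else 0 with hgdef
  have hg0 : ∀ k, 0 ≤ g k := by
    intro k; rw [hgdef]; dsimp only; split <;> positivity
  have hzsum : Summable (fun k : ℕ => ((k:ℝ)^2)⁻¹) := by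
    have := hasSum_zeta_two.summable
    simpa [one_div] using this
  have hgsum : Summable g := by
    apply Summable.of_nonneg_of_le hg0 _ hzsum
    intro k; rw [hgdef]; dsimp only; split
    · exact le_rfl
    · positivity
  have hlog_lb : ∀ k : ℕ, -((4 * c₂ * E) * g k) ≤ Real.log (F k) := by
    intro k
    by_cases hk : K < k
    · have := (key k hk).2.2
      rw [hgdef]; dsimp only; rw [if_pos hk]
      calc -((4 * c₂ * E) * ((k:ℝ)^2)⁻¹) = -(4 * c₂ * E * ((k:ℝ)^2)⁻¹) := by ring
        _ ≤ Real.log (F k) := this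
    · rw [hFtriv k hk, hgdef]; dsimp only; rw [if_neg hk]; simp
  have hlog_ub : ∀ k : ℕ, Real.log (F k) ≤ 0 :=
    fun k => Real.log_nonpos (hFpos k).le (hFle1 k)
  have hlbsum : Summable (fun k : ℕ => -((4 * c₂ * E) * g k)) :=
    ((hgsum.mul_left (4 * c₂ * E)).neg)
  have hlogsum : Summable (fun k : ℕ => Real.log (F k)) := by
    have hns : Summable (fun k : ℕ => -Real.log (F k)) := by
      apply Summable.of_nonneg_of_le (fun k => by linarith [hlog_ub k])
        (fun k => by linarith [hlog_lb k]) (hgsum.mul_left (4 * c₂ * E))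
    simpa using hns.neg
  have hprod : HasProd F (Real.exp (∑' k : ℕ, Real.log (F k))) := by
    apply (hlogsum.hasSum.rexp).congr
    intro b
    congr
    exact funext fun n => Real.exp_log (hFpos n)
  have htprod : (∏' k : ℕ, F k) = Real.exp (∑' k : ℕ, Real.log (F k)) := hprod.tprod_eq
  -- bound the sum
  have hgle : (∑' k : ℕ, g k) ≤ 3 := by
    have h1 : (∑' k : ℕ, g k) ≤ ∑' k : ℕ, ((k:ℝ)^2)⁻¹ := by
      apply Summable.tsum_le_tsum _ hgsum hzsum
      intro k; rw [hgdef]; dsimp only; split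
      · exact le_rfl
      · positivity
    have h2 : (∑' k : ℕ, ((k:ℝ)^2)⁻¹) = π ^ 2 / 6 := by
      have := hasSum_zeta_two.tsum_eq
      simpa [one_div] using this
    have h3 : π ^ 2 / 6 ≤ 3 := by
      have h4 : π ^ 2 ≤ 4 ^ 2 := pow_le_pow_left₀ Real.pi_pos.le Real.pi_le_four 2
      norm_num at h4 ⊢
      linarith
    linarith [h1, h2 ▸ h1]
  have hsum_lb : -(12 * c₂ * E) ≤ ∑' k : ℕ, Real.log (F k) := by
    have h1 : (∑' k : ℕ, -((4 * c₂ * E) * g k)) ≤ ∑' k : ℕ, Real.log (F k) :=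
      Summable.tsum_le_tsum hlog_lb hlbsum hlogsum
    have h2 : (∑' k : ℕ, -((4 * c₂ * E) * g k)) = -((4 * c₂ * E) * ∑' k : ℕ, g k) := by
      rw [tsum_neg, tsum_mul_left]
    have h3 : (4 * c₂ * E) * (∑' k : ℕ, g k) ≤ (4 * c₂ * E) * 3 :=
      mul_le_mul_of_nonneg_left hgle (by positivity)
    rw [h2] at h1
    have h4 : (4 * c₂ * E) * 3 = 12 * c₂ * E := by ring
    linarith
  have hfinal : (∏' k : ℕ, F k) ≥ Real.exp (-(12 * c₂) * E) := by
    rw [htprod]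
    apply Real.exp_le_exp.mpr
    calc -(12 * c₂) * E = -(12 * c₂ * E) := by ring
      _ ≤ ∑' k : ℕ, Real.log (F k) := hsum_lb
  constructor
  · exact hfinal
  · refine le_trans (Real.exp_le_exp.mpr ?_) hfinal
    have := mul_le_mul_of_nonneg_left hE1 (by positivity : (0:ℝ) ≤ 12 * c₂)
    linarith
end

section
/- Let v, w be bounded measurable functions on [0,1]^d and define densities p_v = e^v / ∫ e^v, p_w = e^w / ∫ e^w (with respect to Lebesgue measure on [0,1]^d). Then the Kullback–Leibler divergence satisfies K(p_v, p_w) ≤ C ‖v − w‖_∞² (1 + ‖v − w‖_∞) e^{‖v−w‖_∞} for a constant C depending only on an upper bound for ‖v − w‖_∞. -/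
open Real MeasureTheory

lemma exp_neg_le_quad (t : ℝ) : Real.exp (-t) ≤ 1 - t + t^2 * Real.exp |t| := by
  have h2 : Real.exp (-t) * Real.exp t = 1 := by rw [← Real.exp_add]; simp
  have h3 := Real.exp_pos t
  have h4 := Real.exp_pos (-t)
  rcases le_or_gt 0 t with h | h
  · rw [abs_of_nonneg h]
    have h1 := Real.add_one_le_exp t
    have key1 : Real.exp (-t) * (t+1) ≤ 1 := by nlinarith
    have ht3 : 0 ≤ t^3 := by positivity
    have key2 : Real.exp (-t) ≤ 1 - t + t^2 := by nlinarith
    nlinarith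
  · rw [abs_of_neg h]
    have h1 := Real.add_one_le_exp (-t)
    have h5 := Real.add_one_le_exp t
    have key1 : (1 + t) * Real.exp (-t) ≤ 1 := by nlinarith
    rcases le_or_gt t (-1) with h6 | h6
    · nlinarith
    · nlinarith [sq_nonneg t, sq_nonneg (t * Real.exp (-t)), mul_pos h4 h4, sq_nonneg (1 + t)]

lemma integrable_of_bdd {α : Type*} [MeasurableSpace α] {μ : Measure α} [IsFiniteMeasure μ]
    {f : α → ℝ} (hf : Measurable f) {C : ℝ} (h : ∀ x, |f x| ≤ C) : Integrable f μ :=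
  ⟨hf.aestronglyMeasurable,
    HasFiniteIntegral.of_bounded (C := C) (ae_of_all _ fun x => by
      simpa [Real.norm_eq_abs] using h x)⟩

/-- KL bound for exponentiated densities (Lemma 3.1 of van der Vaart–van Zanten):
for bounded measurable `v, w` on `[0,1]^d` and `p_v = e^v/∫e^v`,
`K(p_v, p_w) ≤ C ‖v−w‖_∞²(1+‖v−w‖_∞)e^{‖v−w‖_∞}` with `C` depending only on an
upper bound `B` for `‖v−w‖_∞`. -/
theorem kl_exp_densities_bound (B : ℝ) (hB : 0 < B) :
    ∃ C : ℝ, 0 < C ∧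
      ∀ (d : ℕ) (v w : (Fin d → ℝ) → ℝ), Measurable v → Measurable w →
      ∀ Mv : ℝ, (∀ x, |v x| ≤ Mv) → ∀ Mw : ℝ, (∀ x, |w x| ≤ Mw) →
      ∀ M : ℝ, (∀ x, |v x - w x| ≤ M) → M ≤ B →
        (∫ x in (Set.univ.pi fun _ : Fin d => Set.Icc (0 : ℝ) 1),
            (Real.exp (v x) /
                ∫ y in (Set.univ.pi fun _ : Fin d => Set.Icc (0 : ℝ) 1), Real.exp (v y)) *
              Real.log
                ((Real.exp (v x) /
                    ∫ y in (Set.univ.pi fun _ : Fin d => Set.Icc (0 : ℝ) 1),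
                      Real.exp (v y)) /
                  (Real.exp (w x) /
                    ∫ y in (Set.univ.pi fun _ : Fin d => Set.Icc (0 : ℝ) 1),
                      Real.exp (w y)))) ≤
          C * M ^ 2 * (1 + M) * Real.exp M := by
  refine ⟨4 * Real.exp B, by positivity, ?_⟩
  intro d v w hv hw Mv hMv Mw hMw M hM hMB
  set S : Set (Fin d → ℝ) := Set.univ.pi fun _ : Fin d => Set.Icc (0:ℝ) 1 with hSdef
  have hvolS : volume S = 1 := by
    rw [hSdef, volume_pi_pi]
    simp [Real.volume_Icc]
  haveI : IsProbabilityMeasure (volume.restrict S) :=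
    ⟨by rw [Measure.restrict_apply_univ]; exact hvolS⟩
  have hM0 : 0 ≤ M := le_trans (abs_nonneg _) (hM (fun _ => 0))
  -- integrability of exp ∘ v, exp ∘ w
  have hintv : Integrable (fun x => Real.exp (v x)) (volume.restrict S) :=
    integrable_of_bdd (Real.measurable_exp.comp hv) (C := Real.exp Mv)
      (fun x => by
        rw [abs_of_pos (Real.exp_pos _)]
        exact Real.exp_le_exp.2 (le_trans (le_abs_self _) (hMv x)))
  have hintw : Integrable (fun x => Real.exp (w x)) (volume.restrict S) :=
    integrable_of_bdd (Real.measurable_exp.comp hw) (C := Real.exp Mw)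
      (fun x => by
        rw [abs_of_pos (Real.exp_pos _)]
        exact Real.exp_le_exp.2 (le_trans (le_abs_self _) (hMw x)))
  set Zv := ∫ y in S, Real.exp (v y) with hZvdef
  set Zw := ∫ y in S, Real.exp (w y) with hZwdef
  have hZvpos : 0 < Zv := by
    have h1 : Real.exp (-Mv) ≤ Zv := by
      have h0 : (∫ _ in S, Real.exp (-Mv)) = Real.exp (-Mv) := by simp
      rw [← h0]
      exact integral_mono (integrable_const _) hintv
        (fun x => Real.exp_le_exp.2 ((abs_le.1 (hMv x)).1))
    exact lt_of_lt_of_le (Real.exp_pos _) h1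
  have hZwpos : 0 < Zw := by
    have h1 : Real.exp (-Mw) ≤ Zw := by
      have h0 : (∫ _ in S, Real.exp (-Mw)) = Real.exp (-Mw) := by simp
      rw [← h0]
      exact integral_mono (integrable_const _) hintw
        (fun x => Real.exp_le_exp.2 ((abs_le.1 (hMw x)).1))
    exact lt_of_lt_of_le (Real.exp_pos _) h1
  -- comparison of normalizers
  have hle1 : Zw ≤ Real.exp M * Zv := by
    have h1 : ∀ x, Real.exp (w x) ≤ Real.exp M * Real.exp (v x) := fun x => by
      rw [← Real.exp_add]
      exact Real.exp_le_exp.2 (by nlinarith [(abs_le.1 (hM x)).1])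
    calc Zw ≤ ∫ x in S, Real.exp M * Real.exp (v x) :=
          integral_mono hintw (hintv.const_mul _) h1
      _ = Real.exp M * Zv := by rw [integral_const_mul]
  have hle2 : Zv ≤ Real.exp M * Zw := by
    have h1 : ∀ x, Real.exp (v x) ≤ Real.exp M * Real.exp (w x) := fun x => by
      rw [← Real.exp_add]
      exact Real.exp_le_exp.2 (by nlinarith [(abs_le.1 (hM x)).2])
    calc Zv ≤ ∫ x in S, Real.exp M * Real.exp (w x) :=
          integral_mono hintv (hintw.const_mul _) h1
      _ = Real.exp M * Zw := by rw [integral_const_mul]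
  have hc : |Real.log Zv - Real.log Zw| ≤ M := by
    rw [abs_le]
    constructor
    · have := Real.log_le_log hZwpos hle1
      rw [Real.log_mul (Real.exp_ne_zero M) hZvpos.ne', Real.log_exp] at this
      linarith
    · have := Real.log_le_log hZvpos hle2
      rw [Real.log_mul (Real.exp_ne_zero M) hZwpos.ne', Real.log_exp] at this
      linarith
  -- density and log-likelihood ratio
  set p : (Fin d → ℝ) → ℝ := fun x => Real.exp (v x) / Zv with hpdef
  set r : (Fin d → ℝ) → ℝ := fun x => (v x - w x) - (Real.log Zv - Real.log Zw) with hrdef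
  have hppos : ∀ x, 0 < p x := fun x => div_pos (Real.exp_pos _) hZvpos
  have hrbd : ∀ x, |r x| ≤ 2 * M := fun x => by
    calc |r x| ≤ |v x - w x| + |Real.log Zv - Real.log Zw| := abs_sub _ _
      _ ≤ 2 * M := by linarith [hM x, hc]
  have hpmeas : Measurable p := (Real.measurable_exp.comp hv).div_const Zv
  have hrmeas : Measurable r := ((hv.sub hw).sub measurable_const)
  have hpbd : ∀ x, |p x| ≤ Real.exp Mv / Zv := fun x => by
    rw [abs_of_pos (hppos x)]
    exact (div_le_div_iff_of_pos_right hZvpos).2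
      (Real.exp_le_exp.2 (le_trans (le_abs_self _) (hMv x)))
  -- integrabilities
  have hintp : Integrable p (volume.restrict S) := integrable_of_bdd hpmeas hpbd
  have hintpr : Integrable (fun x => p x * r x) (volume.restrict S) :=
    integrable_of_bdd (hpmeas.mul hrmeas) (C := (Real.exp Mv / Zv) * (2 * M))
      (fun x => by
        rw [abs_mul]
        exact mul_le_mul (hpbd x) (hrbd x) (abs_nonneg _)
          (le_trans (abs_nonneg _) (hpbd x)))
  have hintpr2 : Integrable (fun x => p x * (r x) ^ 2) (volume.restrict S) :=
    integrable_of_bdd (hpmeas.mul (hrmeas.pow_const 2))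
      (C := (Real.exp Mv / Zv) * (2 * M) ^ 2)
      (fun x => by
        rw [abs_mul]
        refine mul_le_mul (hpbd x) ?_ (abs_nonneg _) (le_trans (abs_nonneg _) (hpbd x))
        rw [abs_pow]
        exact pow_le_pow_left₀ (abs_nonneg _) (hrbd x) 2)
  -- total masses
  have hIp : (∫ x in S, p x) = 1 := by
    rw [hpdef]
    simp only
    rw [integral_div]
    exact div_self hZvpos.ne'
  have hIq : (∫ x in S, Real.exp (w x) / Zw) = 1 := by
    rw [integral_div]
    exact div_self hZwpos.ne'
  -- pointwise identity and bound
  have hED : Real.exp (2 * M) = Real.exp M * Real.exp M := by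
    rw [← Real.exp_add]; ring_nf
  have hptw : ∀ x, Real.exp (w x) / Zw ≤
      p x - p x * r x + Real.exp (2 * M) * (p x * (r x) ^ 2) := by
    intro x
    have hid : Real.exp (w x) / Zw = p x * Real.exp (-(r x)) := by
      rw [hpdef, hrdef]
      simp only
      rw [show -((v x - w x) - (Real.log Zv - Real.log Zw)) =
        (w x - v x) + (Real.log Zv - Real.log Zw) by ring,
        Real.exp_add, Real.exp_sub, Real.exp_sub, Real.exp_log hZvpos, Real.exp_log hZwpos]
      field_simp
    rw [hid]
    have h1 : Real.exp (-(r x)) ≤ 1 - r x + (r x) ^ 2 * Real.exp (2 * M) := by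
      refine le_trans (exp_neg_le_quad (r x)) ?_
      have : Real.exp |r x| ≤ Real.exp (2 * M) := Real.exp_le_exp.2 (hrbd x)
      nlinarith [sq_nonneg (r x)]
    calc p x * Real.exp (-(r x)) ≤ p x * (1 - r x + (r x) ^ 2 * Real.exp (2 * M)) :=
          mul_le_mul_of_nonneg_left h1 (hppos x).le
      _ = p x - p x * r x + Real.exp (2 * M) * (p x * (r x) ^ 2) := by ring
  -- integrate the pointwise bound
  have hkey : (1 : ℝ) ≤ 1 - (∫ x in S, p x * r x) +
      Real.exp (2 * M) * ∫ x in S, p x * (r x) ^ 2 := by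
    have hintq : Integrable (fun x => Real.exp (w x) / Zw) (volume.restrict S) :=
      hintw.div_const _
    have hint1 : Integrable (fun x => p x - p x * r x) (volume.restrict S) :=
      hintp.sub hintpr
    have hint2 : Integrable (fun x => Real.exp (2 * M) * (p x * (r x) ^ 2))
        (volume.restrict S) := hintpr2.const_mul _
    have hmono : (1 : ℝ) ≤ (∫ x in S, (p x - p x * r x)) +
        ∫ x in S, Real.exp (2 * M) * (p x * (r x) ^ 2) := by
      rw [← hIq, ← integral_add hint1 hint2]
      exact integral_mono hintq (hint1.add hint2) hptw
    rw [integral_sub hintp hintpr, hIp, integral_const_mul] at hmono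
    linarith
  have hIpr2 : (∫ x in S, p x * (r x) ^ 2) ≤ 4 * M ^ 2 := by
    have hmono := integral_mono hintpr2 (hintp.const_mul ((2*M)^2))
      (fun x => by
        have : (r x) ^ 2 ≤ (2 * M) ^ 2 := by
          rw [← sq_abs]
          exact pow_le_pow_left₀ (abs_nonneg _) (hrbd x) 2
        calc p x * (r x) ^ 2 ≤ p x * (2 * M) ^ 2 :=
              mul_le_mul_of_nonneg_left this (hppos x).le
          _ = (2 * M) ^ 2 * p x := by ring)
    rw [integral_const_mul, hIp] at hmono
    nlinarith
  -- rewrite the target integrand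
  have hFeq : ∀ x, (Real.exp (v x) / Zv) *
      Real.log ((Real.exp (v x) / Zv) / (Real.exp (w x) / Zw)) = p x * r x := by
    intro x
    rw [hpdef, hrdef]
    simp only
    rw [Real.log_div (div_pos (Real.exp_pos _) hZvpos).ne'
        (div_pos (Real.exp_pos _) hZwpos).ne',
      Real.log_div (Real.exp_ne_zero _) hZvpos.ne',
      Real.log_div (Real.exp_ne_zero _) hZwpos.ne',
      Real.log_exp, Real.log_exp]
    ring
  have hEB : Real.exp M ≤ Real.exp B := Real.exp_le_exp.2 hMB
  calc (∫ x in S, (Real.exp (v x) / Zv) *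
        Real.log ((Real.exp (v x) / Zv) / (Real.exp (w x) / Zw)))
      = ∫ x in S, p x * r x := integral_congr_ae (ae_of_all _ hFeq)
    _ ≤ Real.exp (2 * M) * ∫ x in S, p x * (r x) ^ 2 := by linarith
    _ ≤ Real.exp (2 * M) * (4 * M ^ 2) :=
        mul_le_mul_of_nonneg_left hIpr2 (Real.exp_pos _).le
    _ = 4 * (Real.exp M * Real.exp M) * M ^ 2 := by rw [hED]; ring
    _ ≤ 4 * (Real.exp B * Real.exp M) * M ^ 2 := by
        have h1 := (Real.exp_pos M).le
        have h2 : Real.exp M * Real.exp M ≤ Real.exp B * Real.exp M :=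
          mul_le_mul_of_nonneg_right hEB h1
        nlinarith [mul_nonneg (sub_nonneg.2 h2) (sq_nonneg M)]
    _ = 4 * Real.exp B * M ^ 2 * 1 * Real.exp M := by ring
    _ ≤ 4 * Real.exp B * M ^ 2 * (1 + M) * Real.exp M := by
        refine mul_le_mul_of_nonneg_right
          (mul_le_mul_of_nonneg_left (by linarith) (by positivity)) (Real.exp_pos M).le
end

section
/- Let Λ(u) = 1/(1+e^{-u}) be the logistic function, let G be a probability measure on a set X, and for measurable v, w : X → ℝ define the binary models h_v = Λ∘v, h_w = Λ∘w with joint densities p_v(x,y) = h_v(x)^y (1−h_v(x))^{1−y} g(x) relative to (G-density g) × counting measure on {0,1}. Then K(p_v, p_w) ≤ C ∫ (v − w)² dG for a universal constant C; in particular K(p_v, p_w) ≤ C ‖v − w‖_∞². -/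
open Real MeasureTheory

/-- The logistic function `Λ(u) = 1/(1+e^{-u})`. -/
noncomputable def logisticFn (u : ℝ) : ℝ := 1 / (1 + Real.exp (-u))

lemma logisticFn_pos (u : ℝ) : 0 < logisticFn u := by
  unfold logisticFn; positivity

lemma logisticFn_lt_one (u : ℝ) : logisticFn u < 1 := by
  unfold logisticFn
  rw [div_lt_one (by positivity)]
  have := Real.exp_pos (-u)
  linarith

lemma continuous_logisticFn : Continuous logisticFn := by
  apply Continuous.div continuous_const
  · exact continuous_const.add (Real.continuous_exp.comp continuous_neg)
  · intro u
    have := Real.exp_pos (-u)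
    positivity

lemma hasDerivAt_logisticFn (u : ℝ) :
    HasDerivAt logisticFn (logisticFn u * (1 - logisticFn u)) u := by
  have h : HasDerivAt (fun u : ℝ => 1 + Real.exp (-u)) (-Real.exp (-u)) u := by
    simpa using ((Real.hasDerivAt_exp (-u)).comp u (hasDerivAt_neg u)).const_add 1
  have hne : (1 + Real.exp (-u)) ≠ 0 := by positivity
  have h2 := h.inv hne
  have heq : logisticFn = fun u : ℝ => (1 + Real.exp (-u))⁻¹ := by
    funext t; simp [logisticFn, one_div]
  rw [heq]
  refine h2.congr_deriv ?_
  have he := Real.exp_pos (-u)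
  field_simp [logisticFn]
  ring

lemma logisticFn_lipschitz (s t : ℝ) :
    |logisticFn s - logisticFn t| ≤ (1 / 4) * |s - t| := by
  have key := Convex.norm_image_sub_le_of_norm_hasDerivWithin_le
    (f := logisticFn) (f' := fun x => logisticFn x * (1 - logisticFn x))
    (s := (Set.univ : Set ℝ)) (C := 1 / 4)
    (fun x _ => (hasDerivAt_logisticFn x).hasDerivWithinAt)
    (fun x _ => by
      have h1 := logisticFn_pos x
      have h2 := logisticFn_lt_one x
      show ‖logisticFn x * (1 - logisticFn x)‖ ≤ 1 / 4
      rw [Real.norm_eq_abs, abs_of_nonneg (by nlinarith)]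
      nlinarith [sq_nonneg (logisticFn x - 1 / 2)])
    convex_univ (Set.mem_univ t) (Set.mem_univ s)
  simpa [Real.norm_eq_abs] using key

/-- Pointwise KL bound: the Bernoulli KL divergence with logistic link is bounded by
`(a-b)²/4`. -/
lemma klBern_le (a b : ℝ) :
    |logisticFn a * Real.log (logisticFn a / logisticFn b) +
      (1 - logisticFn a) * Real.log ((1 - logisticFn a) / (1 - logisticFn b))| ≤
      (1 / 4) * (a - b) ^ 2 := by
  set F : ℝ → ℝ := fun t =>
    -(logisticFn a * Real.log (logisticFn t) +
      (1 - logisticFn a) * Real.log (1 - logisticFn t)) with hF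
  have hpos : ∀ t, 0 < logisticFn t := logisticFn_pos
  have hlt : ∀ t, logisticFn t < 1 := logisticFn_lt_one
  have hderiv : ∀ t, HasDerivAt F (logisticFn t - logisticFn a) t := by
    intro t
    have h1 : HasDerivAt (fun t => Real.log (logisticFn t)) (1 - logisticFn t) t := by
      have := (hasDerivAt_logisticFn t).log (ne_of_gt (hpos t))
      convert this using 1
      have hne := ne_of_gt (hpos t)
      field_simp
    have h2 : HasDerivAt (fun t => Real.log (1 - logisticFn t)) (-logisticFn t) t := by
      have hsub : HasDerivAt (fun t => 1 - logisticFn t)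
          (-(logisticFn t * (1 - logisticFn t))) t :=
        (hasDerivAt_logisticFn t).const_sub 1
      have := hsub.log (by have := hlt t; intro h; linarith)
      convert this using 1
      have h1t : (1 : ℝ) - logisticFn t ≠ 0 := by have := hlt t; intro h; linarith
      rw [eq_div_iff h1t]
      ring
    have := ((h1.const_mul (logisticFn a)).add
      (h2.const_mul (1 - logisticFn a))).neg
    refine this.congr_deriv ?_
    ring
  -- Mean value estimate on uIcc a b
  have key := Convex.norm_image_sub_le_of_norm_hasDerivWithin_le
    (f := F) (f' := fun t => logisticFn t - logisticFn a)
    (s := Set.uIcc a b) (C := (1 / 4) * |b - a|)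
    (fun t _ => (hderiv t).hasDerivWithinAt)
    (fun t ht => by
      rw [Real.norm_eq_abs]
      calc |logisticFn t - logisticFn a| ≤ (1 / 4) * |t - a| := logisticFn_lipschitz t a
        _ ≤ (1 / 4) * |b - a| := by
            have hd : dist t a ≤ dist a b :=
              Real.dist_le_of_mem_uIcc ht Set.left_mem_uIcc
            rw [Real.dist_eq, Real.dist_eq] at hd
            have : |b - a| = |a - b| := abs_sub_comm b a
            nlinarith [abs_nonneg (t - a)])
    (convex_uIcc a b) Set.left_mem_uIcc Set.right_mem_uIcc
  have hFdiff : F b - F a =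
      logisticFn a * Real.log (logisticFn a / logisticFn b) +
        (1 - logisticFn a) * Real.log ((1 - logisticFn a) / (1 - logisticFn b)) := by
    rw [hF]
    have h1a : (1 : ℝ) - logisticFn a ≠ 0 := by have := hlt a; intro h; linarith
    have h1b : (1 : ℝ) - logisticFn b ≠ 0 := by have := hlt b; intro h; linarith
    rw [Real.log_div (ne_of_gt (hpos a)) (ne_of_gt (hpos b)),
      Real.log_div h1a h1b]
    ring
  rw [← hFdiff]
  calc |F b - F a| ≤ (1 / 4) * |b - a| * ‖b - a‖ := by
        simpa [Real.norm_eq_abs] using key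
    _ = (1 / 4) * (a - b) ^ 2 := by
        rw [Real.norm_eq_abs, mul_assoc, ← abs_mul]
        rw [show (b - a) * (b - a) = (a - b) ^ 2 by ring, abs_of_nonneg (sq_nonneg _)]

/-- KL bound for binary classification with logistic link (Lemma 3.2 of
van der Vaart–van Zanten, logistic case): the KL divergence between the joint laws of
`(X,Y)` with `X ~ G` and `P(Y=1|X=x) = Λ(v(x))` resp. `Λ(w(x))` satisfies
`K(p_v, p_w) ≤ C ∫ (v−w)² dG ≤ C ‖v−w‖_∞²` for a universal constant `C`. -/
theorem kl_logistic_bound :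
    ∃ C : ℝ, 0 < C ∧
      ∀ (X : Type) [MeasurableSpace X] (G : Measure X), IsProbabilityMeasure G →
      ∀ v w : X → ℝ, Measurable v → Measurable w →
        Integrable (fun x => (v x - w x) ^ 2) G →
        ((∫ x, (logisticFn (v x) * Real.log (logisticFn (v x) / logisticFn (w x)) +
              (1 - logisticFn (v x)) *
                Real.log ((1 - logisticFn (v x)) / (1 - logisticFn (w x)))) ∂G) ≤
            C * ∫ x, (v x - w x) ^ 2 ∂G) ∧
          ∀ M : ℝ, (∀ x, |v x - w x| ≤ M) →
            (∫ x, (logisticFn (v x) * Real.log (logisticFn (v x) / logisticFn (w x)) +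
                (1 - logisticFn (v x)) *
                  Real.log ((1 - logisticFn (v x)) / (1 - logisticFn (w x)))) ∂G) ≤
              C * M ^ 2 := by
  refine ⟨1 / 4, by norm_num, ?_⟩
  intro X _ G hG v w hv hw hInt
  set f : X → ℝ := fun x =>
    logisticFn (v x) * Real.log (logisticFn (v x) / logisticFn (w x)) +
      (1 - logisticFn (v x)) *
        Real.log ((1 - logisticFn (v x)) / (1 - logisticFn (w x))) with hf
  have hLmeas : Measurable logisticFn := continuous_logisticFn.measurable
  have hfm : Measurable f := by
    apply Measurable.add
    · exact (hLmeas.comp hv).mul (((hLmeas.comp hv).div (hLmeas.comp hw)).log)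
    · exact (measurable_const.sub (hLmeas.comp hv)).mul
        (((measurable_const.sub (hLmeas.comp hv)).div
          (measurable_const.sub (hLmeas.comp hw))).log)
  have hbound : ∀ x, |f x| ≤ (1 / 4) * (v x - w x) ^ 2 := fun x => klBern_le (v x) (w x)
  have hgInt : Integrable (fun x => (1 / 4 : ℝ) * (v x - w x) ^ 2) G := hInt.const_mul _
  have hfInt : Integrable f G := by
    refine hgInt.mono' hfm.aestronglyMeasurable ?_
    filter_upwards with x
    simpa [Real.norm_eq_abs] using hbound x
  have hmain : ∫ x, f x ∂G ≤ (1 / 4) * ∫ x, (v x - w x) ^ 2 ∂G := by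
    rw [← integral_const_mul]
    exact integral_mono hfInt hgInt fun x => (le_abs_self _).trans (hbound x)
  refine ⟨hmain, ?_⟩
  intro M hM
  have hsq : ∫ x, (v x - w x) ^ 2 ∂G ≤ M ^ 2 := by
    have : ∫ x, (v x - w x) ^ 2 ∂G ≤ ∫ _x, M ^ 2 ∂G := by
      refine integral_mono hInt (integrable_const _) fun x => ?_
      have h1 := hM x
      nlinarith [abs_nonneg (v x - w x), sq_abs (v x - w x)]
    simpa [integral_const, measure_univ] using this
  calc ∫ x, f x ∂G ≤ (1 / 4) * ∫ x, (v x - w x) ^ 2 ∂G := hmain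
    _ ≤ (1 / 4) * M ^ 2 := by linarith
end

section
/- Let σ_k = k^{-1/2-α} for α > 1/2 and let H̄ satisfy H̄(x) ≤ c_2/x² for x ≥ 1. Fix β with 0 < β ≤ α and D > 0. Then there exist D' and constants C_3, C_4 such that for every integer K ≥ 2 and every ε ≥ D' K^{-β} log K: ∏_{k>K} (1 − 2 H̄(ε k^α / (D log k))) ≥ exp(−C_4 K^{1 + 2(β−α)}) ≥ exp(−C_4 K). -/
open Real

lemma aux_neg_log_le {y : ℝ} (h0 : 0 ≤ y) (h2 : y ≤ 1/2) : -Real.log (1 - y) ≤ 2*y := by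
  have h1 : (0:ℝ) < 1 - y := by linarith
  have h3 := Real.log_le_sub_one_of_pos (x := (1-y)⁻¹) (by positivity)
  rw [Real.log_inv] at h3
  have h4 : (1-y)⁻¹ - 1 = y/(1-y) := by field_simp; ring
  have h5 : y/(1-y) ≤ 2*y := by
    rw [div_le_iff₀ h1]; nlinarith
  linarith

lemma aux_rpow_diff {i : ℝ} (hi : 1 ≤ i) {r : ℝ} (hr : 0 < r) :
    r * (i+1) ^ (-(r+1)) ≤ i ^ (-r) - (i+1) ^ (-r) := by
  have hi0 : (0:ℝ) < i := by linarith
  have hb0 : (0:ℝ) < i + 1 := by linarith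
  set t : ℝ := i / (i+1) with ht
  have ht0 : 0 < t := by positivity
  have ht1 : t < 1 := by rw [ht, div_lt_one hb0]; linarith
  have key : 1 + r * (1 - t) ≤ t ^ (-r) := by
    have hlog : Real.log t ≤ t - 1 := Real.log_le_sub_one_of_pos ht0
    have h6 := Real.add_one_le_exp (-r * Real.log t)
    have h7 : rexp (-r * Real.log t) = t ^ (-r) := by
      rw [Real.rpow_def_of_pos ht0, mul_comm]
    rw [h7] at h6
    nlinarith [h6]
  have hsplit : i ^ (-r) = (i+1) ^ (-r) * t ^ (-r) := by
    rw [ht, Real.div_rpow hi0.le hb0.le]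
    field_simp
  have h1t : 1 - t = 1 / (i+1) := by
    rw [ht]; field_simp; ring
  have hpow : (i+1) ^ (-(r+1)) = (i+1) ^ (-r) * (1/(i+1)) := by
    rw [one_div, ← Real.rpow_neg_one (i+1), ← Real.rpow_add hb0]
    ring_nf
  have hpos : 0 < (i+1) ^ (-r) := Real.rpow_pos_of_pos hb0 _
  calc r * (i+1) ^ (-(r+1)) = (i+1) ^ (-r) * (r * (1 - t)) := by
        rw [hpow, h1t]; ring
    _ ≤ (i+1) ^ (-r) * (t ^ (-r) - 1) := by
        apply mul_le_mul_of_nonneg_left _ hpos.le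
        linarith
    _ = i ^ (-r) - (i+1) ^ (-r) := by rw [hsplit]; ring

lemma aux_tail_sum {r : ℝ} (hr : 0 < r) (K : ℕ) (hK : 1 ≤ K) :
    ∑' k : ℕ, (if K < k then (k:ℝ) ^ (-(r+1)) else 0) ≤ (K:ℝ)^(-r) / r := by
  have hKpos : (0:ℝ) < K := by exact_mod_cast hK
  apply tsum_le_of_sum_le'
  · positivity
  · intro S
    obtain ⟨n, hn⟩ := S.exists_nat_subset_range
    set u : ℕ → ℝ := fun k => if K < k then (k:ℝ) ^ (-(r+1)) else 0 with hu
    have hunn : ∀ k, 0 ≤ u k := by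
      intro k; simp only [hu]; split
      · positivity
      · exact le_rfl
    calc ∑ k ∈ S, u k ≤ ∑ k ∈ Finset.range n, u k :=
          Finset.sum_le_sum_of_subset_of_nonneg hn (fun i _ _ => hunn i)
      _ ≤ ∑ k ∈ Finset.range (n+1), u k := by
          rw [Finset.sum_range_succ]; have := hunn n; linarith
      _ = (∑ i ∈ Finset.range n, u (i+1)) + u 0 := Finset.sum_range_succ' u n
      _ = ∑ i ∈ Finset.range n, u (i+1) := by
          simp [hu]
      _ ≤ ∑ i ∈ Finset.range n,
            (1/r) * (((max i K : ℕ):ℝ) ^ (-r) - ((max (i+1) K : ℕ):ℝ) ^ (-r)) := by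
          apply Finset.sum_le_sum
          intro i _
          by_cases hiK : K ≤ i
          · have h1 : K < i + 1 := by omega
            have hmax1 : max i K = i := max_eq_left hiK
            have hmax2 : max (i+1) K = i + 1 := max_eq_left (by omega)
            simp only [hu, if_pos h1, hmax1, hmax2]
            have hi1 : (1:ℝ) ≤ (i:ℝ) := by exact_mod_cast le_trans hK hiK
            have hd := aux_rpow_diff hi1 hr
            have hcast : ((i+1 : ℕ):ℝ) = (i:ℝ) + 1 := by push_cast; ring
            rw [hcast]
            calc ((i:ℝ)+1) ^ (-(r+1)) = 1/r * (r * ((i:ℝ)+1) ^ (-(r+1))) := by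
                  field_simp
              _ ≤ 1/r * ((i:ℝ)^(-r) - ((i:ℝ)+1)^(-r)) :=
                  mul_le_mul_of_nonneg_left hd (by positivity)
          · have h1 : ¬ K < i + 1 := by omega
            have hmax1 : max i K = K := max_eq_right (by omega)
            have hmax2 : max (i+1) K = K := max_eq_right (by omega)
            simp only [hu, if_neg h1, hmax1, hmax2, sub_self, mul_zero, le_refl]
      _ = (1/r) * (((max 0 K : ℕ):ℝ) ^ (-r) - ((max n K : ℕ):ℝ) ^ (-r)) := by
          rw [← Finset.sum_range_sub' (fun i => ((max i K : ℕ):ℝ) ^ (-r)) n, Finset.mul_sum]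
      _ ≤ (K:ℝ) ^ (-r) / r := by
          have h0 : max 0 K = K := max_eq_right (Nat.zero_le K)
          rw [h0]
          have hn1 : (0:ℝ) < ((max n K : ℕ):ℝ) := by
            have : 1 ≤ max n K := le_trans hK (le_max_right n K)
            exact_mod_cast this
          have hnn : 0 ≤ ((max n K : ℕ):ℝ) ^ (-r) := (Real.rpow_pos_of_pos hn1 _).le
          rw [one_div, inv_mul_eq_div, div_le_div_iff₀ hr hr]
          nlinarith [hnn]

lemma aux_log_growth {γ : ℝ} (hγ : 0 < γ) {Kr kr : ℝ} (hK : 2 ≤ Kr) (hk : Kr ≤ kr) :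
    Real.log kr ≤ (1 + 1/(γ * Real.log 2)) * Real.log Kr * (kr/Kr)^γ := by
  have hK0 : (0:ℝ) < Kr := by linarith
  have hk0 : (0:ℝ) < kr := by linarith
  have hlog2 : (0:ℝ) < Real.log 2 := Real.log_pos (by norm_num)
  have hlogK : Real.log 2 ≤ Real.log Kr := Real.log_le_log (by norm_num) hK
  have hsplit : Real.log kr = Real.log Kr + Real.log (kr/Kr) := by
    rw [Real.log_div hk0.ne' hK0.ne']; ring
  have hquot : Real.log (kr/Kr) ≤ (kr/Kr)^γ / γ :=
    Real.log_le_rpow_div (by positivity) hγ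
  have hX : (1:ℝ) ≤ (kr/Kr)^γ :=
    Real.one_le_rpow ((one_le_div hK0).2 hk) hγ.le
  set X := (kr/Kr)^γ
  have hLK : 0 < Real.log Kr := lt_of_lt_of_le hlog2 hlogK
  rw [hsplit]
  have e1 : Real.log Kr ≤ Real.log Kr * X := le_mul_of_one_le_right hLK.le hX
  have e2 : X/γ ≤ (Real.log Kr/Real.log 2) * (X/γ) := by
    apply le_mul_of_one_le_left (by positivity)
    rw [le_div_iff₀ hlog2]; linarith
  have e3 : (1 + 1/(γ * Real.log 2)) * Real.log Kr * X
      = Real.log Kr * X + (Real.log Kr/Real.log 2) * (X/γ) := by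
    field_simp
  rw [e3]
  linarith

/-- High-frequency prior-mass factor for the HT(α) heavy-tailed series prior with
scalings `σ_k = k^{-1/2-α}`: for a tail function `H̄` with `H̄(x) ≤ c₂/x²` for `x ≥ 1`,
`0 < β ≤ α`, `α > 1/2` and `D > 0`, there are `D'`, `C₄` such that for all `K ≥ 2` and
`ε ≥ D' K^{-β} log K`,
`∏_{k>K}(1 − 2H̄(ε k^α/(D log k))) ≥ exp(−C₄ K^{1+2(β−α)}) ≥ exp(−C₄ K)`. -/
theorem HT_highfreq_prior_mass
    (Hbar : ℝ → ℝ) (c₂ α β D : ℝ) (hc₂ : 0 < c₂) (hα : 1 / 2 < α)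
    (hβ0 : 0 < β) (hβα : β ≤ α) (hD : 0 < D)
    (hnonneg : ∀ x, 0 ≤ Hbar x) (hanti : Antitone Hbar)
    (htail : ∀ x : ℝ, 1 ≤ x → Hbar x ≤ c₂ / x ^ 2) :
    ∃ D' C₄ : ℝ, 0 < D' ∧ 0 < C₄ ∧
      ∀ K : ℕ, 2 ≤ K → ∀ ε : ℝ, D' * (K : ℝ) ^ (-β) * Real.log K ≤ ε →
        ((∏' k : ℕ, (if K < k then
              1 - 2 * Hbar (ε * (k : ℝ) ^ α / (D * Real.log k)) else 1)) ≥
            Real.exp (-C₄ * (K : ℝ) ^ (1 + 2 * (β - α)))) ∧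
          Real.exp (-C₄ * (K : ℝ) ^ (1 + 2 * (β - α))) ≥ Real.exp (-C₄ * K) := by
  have hlog2 : (0:ℝ) < Real.log 2 := Real.log_pos (by norm_num)
  set M : ℝ := max 1 (Real.sqrt (8*c₂)) with hMdef
  have hM1 : (1:ℝ) ≤ M := le_max_left _ _
  have hM0 : (0:ℝ) < M := by linarith
  have hM2 : 8*c₂ ≤ M^2 := by
    have h := le_max_right 1 (Real.sqrt (8*c₂))
    nlinarith [Real.sq_sqrt (by positivity : (0:ℝ) ≤ 8*c₂), Real.sqrt_nonneg (8*c₂)]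
  set δ : ℝ := (2*α-1)/4 with hδdef
  have hδ : 0 < δ := by rw [hδdef]; linarith
  set r : ℝ := α - 1/2 with hrdef
  have hr : 0 < r := by rw [hrdef]; linarith
  set Cδ : ℝ := 1 + 1/(δ * Real.log 2) with hCδdef
  have hCδ : 0 < Cδ := by
    have : 0 < 1/(δ * Real.log 2) := by positivity
    rw [hCδdef]; linarith
  have hαδ : 0 < α - δ := by rw [hδdef]; linarith
  refine ⟨M*D*Cδ, 4*c₂/M^2/r, by positivity, by positivity, ?_⟩
  intro K hK ε hε
  have hK2 : (2:ℝ) ≤ (K:ℝ) := by exact_mod_cast hK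
  have hK0 : (0:ℝ) < K := by linarith
  have hK1 : (1:ℝ) ≤ K := by linarith
  have hlogK : 0 < Real.log K := Real.log_pos (by linarith)
  have hεpos : 0 < ε := lt_of_lt_of_le (by positivity) hε
  -- key lower bound on the argument
  have key : ∀ k : ℕ, K < k →
      M * ((K:ℝ)^(δ-β) * (k:ℝ)^(α-δ)) ≤ ε * (k:ℝ)^α / (D * Real.log k) := by
    intro k hk
    have hkK : (K:ℝ) ≤ (k:ℝ) := by exact_mod_cast hk.le
    have hk0 : (0:ℝ) < k := by linarith
    have hk2 : (2:ℝ) ≤ k := by linarith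
    have hlogk : 0 < Real.log k := Real.log_pos (by linarith)
    have hDlog : 0 < D * Real.log k := mul_pos hD hlogk
    rw [le_div_iff₀ hDlog]
    have hgrow : Real.log k ≤ Cδ * Real.log K * ((k:ℝ)/(K:ℝ))^δ := by
      have h := aux_log_growth hδ hK2 hkK
      rw [← hCδdef] at h
      exact h
    have e1 : (K:ℝ)^(δ-β) * ((k:ℝ)/(K:ℝ))^δ * (k:ℝ)^(α-δ)
        = (K:ℝ)^(-β) * (k:ℝ)^α := by
      rw [Real.div_rpow hk0.le hK0.le]
      have a1 : (K:ℝ)^(δ-β) / (K:ℝ)^δ = (K:ℝ)^(-β) := by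
        rw [← Real.rpow_sub hK0]; ring_nf
      have a2 : (k:ℝ)^δ * (k:ℝ)^(α-δ) = (k:ℝ)^α := by
        rw [← Real.rpow_add hk0]; ring_nf
      calc (K:ℝ)^(δ-β) * ((k:ℝ)^δ / (K:ℝ)^δ) * (k:ℝ)^(α-δ)
          = ((K:ℝ)^(δ-β) / (K:ℝ)^δ) * ((k:ℝ)^δ * (k:ℝ)^(α-δ)) := by ring
        _ = (K:ℝ)^(-β) * (k:ℝ)^α := by rw [a1, a2]
    calc M * ((K:ℝ)^(δ-β) * (k:ℝ)^(α-δ)) * (D * Real.log k)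
        ≤ M * ((K:ℝ)^(δ-β) * (k:ℝ)^(α-δ)) * (D * (Cδ * Real.log K * ((k:ℝ)/(K:ℝ))^δ)) := by
          apply mul_le_mul_of_nonneg_left (mul_le_mul_of_nonneg_left hgrow hD.le)
          positivity
      _ = (M*D*Cδ * (K:ℝ)^(-β) * Real.log K) * (k:ℝ)^α := by
          calc M * ((K:ℝ)^(δ-β) * (k:ℝ)^(α-δ)) * (D * (Cδ * Real.log K * ((k:ℝ)/(K:ℝ))^δ))
              = (M*D*Cδ) * Real.log K *
                  ((K:ℝ)^(δ-β) * ((k:ℝ)/(K:ℝ))^δ * (k:ℝ)^(α-δ)) := by ring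
            _ = (M*D*Cδ * (K:ℝ)^(-β) * Real.log K) * (k:ℝ)^α := by rw [e1]; ring
      _ ≤ ε * (k:ℝ)^α := mul_le_mul_of_nonneg_right hε (by positivity)
  have hxM : ∀ k : ℕ, K < k → M ≤ ε * (k:ℝ)^α / (D * Real.log k) := by
    intro k hk
    have hkK : (K:ℝ) ≤ (k:ℝ) := by exact_mod_cast hk.le
    have h1 : (K:ℝ)^(α-δ) ≤ (k:ℝ)^(α-δ) := Real.rpow_le_rpow hK0.le hkK hαδ.le
    have h2 : (K:ℝ)^(δ-β) * (K:ℝ)^(α-δ) = (K:ℝ)^(α-β) := by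
      rw [← Real.rpow_add hK0]; ring_nf
    have h3 : (1:ℝ) ≤ (K:ℝ)^(α-β) := Real.one_le_rpow hK1 (by linarith)
    have h4 : (1:ℝ) ≤ (K:ℝ)^(δ-β) * (k:ℝ)^(α-δ) := by
      calc (1:ℝ) ≤ (K:ℝ)^(α-β) := h3
        _ = (K:ℝ)^(δ-β) * (K:ℝ)^(α-δ) := h2.symm
        _ ≤ (K:ℝ)^(δ-β) * (k:ℝ)^(α-δ) :=
            mul_le_mul_of_nonneg_left h1 (by positivity)
    calc M = M * 1 := (mul_one M).symm
      _ ≤ M * ((K:ℝ)^(δ-β) * (k:ℝ)^(α-δ)) := mul_le_mul_of_nonneg_left h4 hM0.le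
      _ ≤ _ := key k hk
  -- bounds on Hbar at the argument
  have hHb : ∀ k : ℕ, K < k →
      Hbar (ε * (k:ℝ)^α / (D * Real.log k)) ≤ 1/8 ∧
      Hbar (ε * (k:ℝ)^α / (D * Real.log k)) ≤
        c₂/M^2 * ((K:ℝ)^(2*(β-δ)) * (k:ℝ)^(-(r+1))) := by
    intro k hk
    set xk := ε * (k:ℝ)^α / (D * Real.log k) with hxk
    have hxMk := hxM k hk
    have hx1 : 1 ≤ xk := le_trans hM1 hxMk
    have hx0 : 0 < xk := by linarith
    have hHt : Hbar xk ≤ c₂ / xk^2 := htail _ hx1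
    constructor
    · have : c₂ / xk^2 ≤ 1/8 := by
        rw [div_le_div_iff₀ (by positivity) (by norm_num)]
        nlinarith [hM2, hxMk, hM0]
      linarith
    · have hkK : (K:ℝ) ≤ (k:ℝ) := by exact_mod_cast hk.le
      have hk0 : (0:ℝ) < k := by linarith
      set P : ℝ := (K:ℝ)^(δ-β) * (k:ℝ)^(α-δ) with hPdef
      have hP0 : 0 < P := by rw [hPdef]; positivity
      have hxP : M * P ≤ xk := key k hk
      have hsq : M^2*P^2 ≤ xk^2 := by
        calc M^2*P^2 = (M*P)^2 := by ring
          _ ≤ xk^2 := pow_le_pow_left₀ (by positivity) hxP 2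
      have hstep : c₂ / xk^2 ≤ c₂ / (M^2 * P^2) :=
        div_le_div_of_nonneg_left hc₂.le (by positivity) hsq
      have hPsq : P^2 = (K:ℝ)^(2*(δ-β)) * (k:ℝ)^(2*(α-δ)) := by
        rw [hPdef, mul_pow, sq ((K:ℝ)^(δ-β)), sq ((k:ℝ)^(α-δ)),
          ← Real.rpow_add hK0, ← Real.rpow_add hk0]
        ring_nf
      have hKneg : (K:ℝ)^(2*(β-δ)) = ((K:ℝ)^(2*(δ-β)))⁻¹ := by
        rw [← Real.rpow_neg hK0.le]; congr 1; ring
      have hkneg : (k:ℝ)^(-(r+1)) = ((k:ℝ)^(2*(α-δ)))⁻¹ := by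
        rw [← Real.rpow_neg hk0.le]; congr 1; rw [hrdef, hδdef]; ring
      have heq : c₂ / (M^2 * P^2)
          = c₂/M^2 * ((K:ℝ)^(2*(β-δ)) * (k:ℝ)^(-(r+1))) := by
        rw [hPsq, hKneg, hkneg]
        field_simp
      linarith [hstep, hHt, heq.symm.le, heq.le]
  -- the log sequence and its bound
  set a : ℕ → ℝ := fun k => if K < k then
      1 - 2 * Hbar (ε * (k:ℝ)^α / (D * Real.log k)) else 1 with hadef
  set l : ℕ → ℝ := fun k => Real.log (a k) with hldef
  set c : ℝ := 4*c₂/M^2 * (K:ℝ)^(2*(β-δ)) with hcdef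
  have hc0 : 0 ≤ c := by rw [hcdef]; positivity
  set u : ℕ → ℝ := fun k => if K < k then (k:ℝ)^(-(r+1)) else 0 with hudef
  have hunn : ∀ k, 0 ≤ u k := by
    intro k; rw [hudef]; dsimp only; split
    · positivity
    · exact le_rfl
  set t : ℕ → ℝ := fun k => c * u k with htdef
  have ha_pos : ∀ k, 0 < a k := by
    intro k; rw [hadef]; dsimp only; split
    · rename_i hk
      have := (hHb k hk).1
      have := hnonneg (ε * (k:ℝ)^α / (D * Real.log k))
      linarith
    · norm_num
  have ha_le1 : ∀ k, a k ≤ 1 := by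
    intro k; rw [hadef]; dsimp only; split
    · have := hnonneg (ε * (k:ℝ)^α / (D * Real.log k)); linarith
    · exact le_rfl
  have hl0 : ∀ k, l k ≤ 0 := fun k => Real.log_nonpos (ha_pos k).le (ha_le1 k)
  have hlt : ∀ k, -(l k) ≤ t k := by
    intro k
    rw [hldef, htdef, hadef, hudef]; dsimp only
    by_cases hk : K < k
    · rw [if_pos hk, if_pos hk]
      obtain ⟨h8, hbd⟩ := hHb k hk
      have h0 := hnonneg (ε * (k:ℝ)^α / (D * Real.log k))
      have := aux_neg_log_le (y := 2 * Hbar (ε * (k:ℝ)^α / (D * Real.log k)))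
        (by linarith) (by linarith)
      calc -Real.log (1 - 2 * Hbar (ε * (k:ℝ)^α / (D * Real.log k)))
          ≤ 2 * (2 * Hbar (ε * (k:ℝ)^α / (D * Real.log k))) := this
        _ ≤ 4 * (c₂/M^2 * ((K:ℝ)^(2*(β-δ)) * (k:ℝ)^(-(r+1)))) := by linarith
        _ = c * (k:ℝ)^(-(r+1)) := by rw [hcdef]; ring
    · rw [if_neg hk, if_neg hk, Real.log_one, mul_zero]; norm_num
  -- summability
  have husum : Summable u := by
    have hsummg : Summable (fun k : ℕ => ((k:ℝ)^(r+1))⁻¹) :=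
      Real.summable_nat_rpow_inv.2 (by linarith)
    refine Summable.of_nonneg_of_le hunn ?_ hsummg
    intro k
    rw [hudef]; dsimp only; split
    · have hk0 : (0:ℝ) ≤ k := Nat.cast_nonneg k
      rw [Real.rpow_neg hk0]
    · positivity
  have htsumm : Summable t := husum.mul_left c
  have hnlsum : Summable (fun k => -(l k)) :=
    Summable.of_nonneg_of_le (fun k => neg_nonneg.2 (hl0 k)) hlt htsumm
  have hlsum : Summable l := by
    have := hnlsum.neg
    simpa using this
  -- product identity
  have hha : HasProd a (Real.exp (∑' k, l k)) := by
    have h := hlsum.hasSum.rexp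
    have hfe : rexp ∘ l = a := funext fun k => Real.exp_log (ha_pos k)
    rwa [hfe] at h
  have htpa : ∏' k, a k = Real.exp (∑' k, l k) := hha.tprod_eq
  -- sum bound
  have hsum1 : ∑' k, (-(l k)) ≤ ∑' k, t k := Summable.tsum_le_tsum hlt hnlsum htsumm
  have hsum2 : ∑' k, t k = c * ∑' k, u k := tsum_mul_left
  have hsum3 : ∑' k, u k ≤ (K:ℝ)^(-r)/r := by
    rw [hudef]
    exact aux_tail_sum hr K (by omega)
  have hcomb : (K:ℝ)^(2*(β-δ)) * (K:ℝ)^(-r) = (K:ℝ)^(1+2*(β-α)) := by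
    rw [← Real.rpow_add hK0]; congr 1; rw [hδdef, hrdef]; ring
  have hfinal : c * ((K:ℝ)^(-r)/r) = 4*c₂/M^2/r * (K:ℝ)^(1+2*(β-α)) := by
    rw [hcdef]
    calc 4*c₂/M^2 * (K:ℝ)^(2*(β-δ)) * ((K:ℝ)^(-r)/r)
        = 4*c₂/M^2/r * ((K:ℝ)^(2*(β-δ)) * (K:ℝ)^(-r)) := by ring
      _ = 4*c₂/M^2/r * (K:ℝ)^(1+2*(β-α)) := by rw [hcomb]
  have hlb : -(4*c₂/M^2/r * (K:ℝ)^(1+2*(β-α))) ≤ ∑' k, l k := by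
    have h1 : ∑' k, (-(l k)) = -(∑' k, l k) := tsum_neg
    have h2 : c * ∑' k, u k ≤ c * ((K:ℝ)^(-r)/r) :=
      mul_le_mul_of_nonneg_left hsum3 hc0
    rw [h1] at hsum1
    rw [hsum2] at hsum1
    linarith [hfinal ▸ le_trans hsum1 h2]
  constructor
  · rw [ge_iff_le]
    calc Real.exp (-(4*c₂/M^2/r) * (K:ℝ)^(1+2*(β-α)))
        = Real.exp (-(4*c₂/M^2/r * (K:ℝ)^(1+2*(β-α)))) := by rw [neg_mul]
      _ ≤ Real.exp (∑' k, l k) := Real.exp_le_exp.2 hlb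
      _ = ∏' k, a k := htpa.symm
  · rw [ge_iff_le, Real.exp_le_exp]
    have hpow : (K:ℝ)^(1+2*(β-α)) ≤ (K:ℝ) := by
      have := Real.rpow_le_rpow_of_exponent_le hK1 (by linarith : 1+2*(β-α) ≤ 1)
      rwa [Real.rpow_one] at this
    have hC4 : (0:ℝ) ≤ 4*c₂/M^2/r := by positivity
    linarith [mul_le_mul_of_nonneg_left hpow hC4]
end
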